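/- arXiv:0904.0492 — 6 statements merged into one kernel-verified Lean document; each statement's English description precedes it below -/
import Mathlib

section
/- Let n ≥ 1, let 1 ≤ k ≤ n be an integer, and let λ = (λ_1, …, λ_n) ∈ ℝ^n have all entries positive. Then ∑_{i=1}^n λ_i² ( S_{k-1,i}^n(λ)² − S_{k,i}^n(λ) · S_{k-2,i}^n(λ) ) ≥ (k/(n−k+1)) · S_k^n(λ)². Equivalently, since the i-th partial derivative of Q_k = S_k^n/S_{k-1}^n at λ equals (S_{k-1,i}^n(λ)² − S_{k,i}^n(λ) S_{k-2,i}^n(λ))/S_{k-1}^n(λ)², this states ∑_{i=1}^n (∂Q_k/∂λ_i)(λ) · λ_i² ≥ (k/(n−k+1)) · Q_k(λ)². -/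
/-- The elementary symmetric polynomial `S_k^m(λ)`, with the convention that
it vanishes for `k < 0` or `k > m` (the latter automatic) and `S_0^m = 1`. -/
noncomputable def esymmS (m : ℕ) (k : ℤ) (lam : Fin m → ℝ) : ℝ :=
  if k < 0 then 0 else
    ∑ t ∈ Finset.univ.powersetCard k.toNat, ∏ i ∈ t, lam i

/-- `S_{k,i}^m(λ) = S_k^{m-1}(λ̂_i)`: the elementary symmetric polynomial of
`λ` with its `i`-th entry deleted. -/
noncomputable def esymmSDel (m : ℕ) (k : ℤ) (lam : Fin m → ℝ) (i : Fin m) : ℝ :=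
  if k < 0 then 0 else
    ∑ t ∈ (Finset.univ.erase i).powersetCard k.toNat, ∏ j ∈ t, lam j

namespace DQkAux

variable {n : ℕ}

noncomputable def Ee (lam : Fin n → ℝ) (s : Finset (Fin n)) (j : ℕ) : ℝ :=
  ∑ t ∈ s.powersetCard j, ∏ i ∈ t, lam i

noncomputable def Pp (lam : Fin n → ℝ) (s : Finset (Fin n)) (j : ℕ) : ℝ :=
  Ee lam s j / (s.card.choose j : ℝ)

lemma Ee_zero (lam : Fin n → ℝ) (s : Finset (Fin n)) : Ee lam s 0 = 1 := by
  simp [Ee]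

lemma Ee_eq_zero (lam : Fin n → ℝ) {s : Finset (Fin n)} {j : ℕ} (h : s.card < j) :
    Ee lam s j = 0 := by
  simp [Ee, Finset.powersetCard_eq_empty.2 h]

lemma Ee_pos (lam : Fin n → ℝ) {s : Finset (Fin n)} (h : ∀ i ∈ s, 0 < lam i) {j : ℕ}
    (hj : j ≤ s.card) : 0 < Ee lam s j := by
  apply Finset.sum_pos
  · intro t ht
    rw [Finset.mem_powersetCard] at ht
    exact Finset.prod_pos fun i hi => h i (ht.1 hi)
  · exact Finset.powersetCard_nonempty.2 hj

lemma Ee_nonneg (lam : Fin n → ℝ) {s : Finset (Fin n)} (h : ∀ i ∈ s, 0 < lam i) (j : ℕ) :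
    0 ≤ Ee lam s j := by
  rcases le_or_gt j s.card with hj | hj
  · exact (Ee_pos lam h hj).le
  · rw [Ee_eq_zero lam hj]

lemma Ee_insert (lam : Fin n → ℝ) {a : Fin n} {s : Finset (Fin n)} (ha : a ∉ s) (j : ℕ) :
    Ee lam (insert a s) (j + 1) = Ee lam s (j + 1) + lam a * Ee lam s j := by
  unfold Ee
  rw [Finset.powersetCard_succ_insert ha, Finset.sum_union, Finset.sum_image, Finset.mul_sum]
  · congr 1
    apply Finset.sum_congr rfl
    intro t ht
    rw [Finset.mem_powersetCard] at ht
    have hat : a ∉ t := fun hat => ha (ht.1 hat)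
    rw [Finset.prod_insert hat]
  · intro t ht u hu htu
    rw [Finset.mem_coe, Finset.mem_powersetCard] at ht hu
    have hat : a ∉ t := fun h' => ha (ht.1 h')
    have hau : a ∉ u := fun h' => ha (hu.1 h')
    have := congrArg (Finset.erase · a) htu
    simpa [Finset.erase_insert hat, Finset.erase_insert hau] using this
  · rw [Finset.disjoint_left]
    intro t ht ht'
    rw [Finset.mem_powersetCard] at ht
    have hat : a ∉ t := fun h' => ha (ht.1 h')
    rw [Finset.mem_image] at ht'
    obtain ⟨u, hu, rfl⟩ := ht'
    exact hat (Finset.mem_insert_self a u)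


lemma key_alg (A jr b x y z w : ℝ) (hA : 1 ≤ A) (hj : 1 ≤ jr) (hb : 0 ≤ b)
    (hx : 0 ≤ x) (hy : 0 ≤ y) (hz : 0 ≤ z) (hw : 0 ≤ w)
    (h1 : z * y ≤ x ^ 2) (h2 : x * w ≤ y ^ 2) (h3 : z * w ≤ x * y) :
    ((A - 1) * z + (jr + 1) * b * x) * ((A + 1) * y + (jr - 1) * b * w) ≤
      (A * x + jr * b * y) ^ 2 := by
  nlinarith [sq_nonneg (x - b * y),
    mul_nonneg (mul_nonneg (by linarith : (0:ℝ) ≤ A - 1) (by linarith : (0:ℝ) ≤ A + 1))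
      (by linarith : 0 ≤ x ^ 2 - z * y),
    mul_nonneg (mul_nonneg (mul_nonneg (by linarith : (0:ℝ) ≤ jr + 1)
      (by linarith : (0:ℝ) ≤ jr - 1)) (mul_nonneg hb hb))
      (by linarith : 0 ≤ y ^ 2 - x * w),
    mul_nonneg (mul_nonneg (mul_nonneg (by linarith : (0:ℝ) ≤ A - 1)
      (by linarith : (0:ℝ) ≤ jr - 1)) hb) (by linarith : 0 ≤ x * y - z * w)]

variable (lam : Fin n → ℝ)

lemma Pp_zero (s : Finset (Fin n)) : Pp lam s 0 = 1 := by
  simp [Pp, Ee_zero]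

lemma Pp_eq_zero {s : Finset (Fin n)} {j : ℕ} (h : s.card < j) : Pp lam s j = 0 := by
  simp [Pp, Ee_eq_zero lam h]

lemma Pp_pos {s : Finset (Fin n)} (h : ∀ i ∈ s, 0 < lam i) {j : ℕ} (hj : j ≤ s.card) :
    0 < Pp lam s j :=
  div_pos (Ee_pos lam h hj) (by exact_mod_cast Nat.choose_pos hj)

lemma Pp_nonneg {s : Finset (Fin n)} (h : ∀ i ∈ s, 0 < lam i) (j : ℕ) : 0 ≤ Pp lam s j := by
  rcases le_or_gt j s.card with hj | hj
  · exact (Pp_pos lam h hj).le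
  · rw [Pp_eq_zero lam hj]

lemma Pp_ratio {s : Finset (Fin n)} (h : ∀ i ∈ s, 0 < lam i)
    (hlc : ∀ j : ℕ, Pp lam s (j + 2) * Pp lam s j ≤ Pp lam s (j + 1) ^ 2) (j : ℕ) :
    Pp lam s (j + 3) * Pp lam s j ≤ Pp lam s (j + 2) * Pp lam s (j + 1) := by
  rcases le_or_gt (j + 3) s.card with hcard | hcard
  · have p1 : 0 < Pp lam s (j + 1) := Pp_pos lam h (by omega)
    have p2 : 0 < Pp lam s (j + 2) := Pp_pos lam h (by omega)
    have h1 := hlc j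
    have h2 := hlc (j + 1)
    have key : (Pp lam s (j + 3) * Pp lam s (j + 1)) * (Pp lam s (j + 2) * Pp lam s j) ≤
        Pp lam s (j + 2) ^ 2 * Pp lam s (j + 1) ^ 2 := by
      have := mul_le_mul h2 h1 (mul_nonneg (Pp_nonneg lam h _) (Pp_nonneg lam h _)) (sq_nonneg _)
      calc Pp lam s (j + 3) * Pp lam s (j + 1) * (Pp lam s (j + 2) * Pp lam s j)
          = Pp lam s (j + 1 + 2) * Pp lam s (j + 1) * (Pp lam s (j + 2) * Pp lam s j) := by norm_num
        _ ≤ Pp lam s (j + 1 + 1) ^ 2 * Pp lam s (j + 1) ^ 2 := this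
        _ = Pp lam s (j + 2) ^ 2 * Pp lam s (j + 1) ^ 2 := by norm_num
    have hpos : 0 < Pp lam s (j + 1) * Pp lam s (j + 2) := mul_pos p1 p2
    exact le_of_mul_le_mul_right (by nlinarith [key]) hpos
  · rw [Pp_eq_zero lam (by omega : s.card < j + 3)]
    have := mul_nonneg (Pp_nonneg lam h (j + 2)) (Pp_nonneg lam h (j + 1))
    simpa using this

lemma Pp_lc (h : ∀ i : Fin n, 0 < lam i) (s : Finset (Fin n)) :
    ∀ j : ℕ, Pp lam s (j + 2) * Pp lam s j ≤ Pp lam s (j + 1) ^ 2 := by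
  induction s using Finset.induction_on with
  | empty =>
    intro j
    rw [Pp_eq_zero lam (by simp : (∅ : Finset (Fin n)).card < j + 2)]
    simpa using sq_nonneg (Pp lam (∅ : Finset (Fin n)) (j + 1))
  | @insert a s ha ih =>
    have hposs : ∀ i ∈ s, 0 < lam i := fun i _ => h i
    have hb : 0 < lam a := h a
    have hcard : (insert a s).card = s.card + 1 := Finset.card_insert_of_notMem ha
    have hq : ∀ j : ℕ, Pp lam (insert a s) (j + 1) =
        (((s.card : ℝ) - j) * Pp lam s (j + 1) + ((j : ℝ) + 1) * lam a * Pp lam s j) /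
          ((s.card : ℝ) + 1) := by
      intro j
      simp only [Pp, hcard, Ee_insert lam ha]
      rcases lt_trichotomy j s.card with hjm | hjm | hjm
      · have hc1 : ((s.card.choose (j + 1) : ℝ)) ≠ 0 := by
          exact_mod_cast (Nat.choose_pos (by omega : j + 1 ≤ s.card)).ne'
        have hc2 : ((s.card.choose j : ℝ)) ≠ 0 := by
          exact_mod_cast (Nat.choose_pos (by omega : j ≤ s.card)).ne'
        have hc3 : (((s.card + 1).choose (j + 1) : ℝ)) ≠ 0 := by
          exact_mod_cast (Nat.choose_pos (by omega : j + 1 ≤ s.card + 1)).ne'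
        have hm1 : ((s.card : ℝ) + 1) ≠ 0 := by positivity
        have idA : ((s.card.choose (j + 1) : ℝ)) * ((s.card : ℝ) + 1) =
            (((s.card + 1).choose (j + 1) : ℝ)) * ((s.card : ℝ) - j) := by
          have hnat := Nat.choose_mul_succ_eq s.card (j + 1)
          have hsub : s.card + 1 - (j + 1) = s.card - j := by omega
          rw [hsub] at hnat
          have h' := congrArg (fun x : ℕ => (x : ℝ)) hnat
          push_cast [Nat.cast_sub (by omega : j ≤ s.card)] at h'
          linarith [h']
        have idB : ((s.card : ℝ) + 1) * ((s.card.choose j : ℝ)) =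
            (((s.card + 1).choose (j + 1) : ℝ)) * ((j : ℝ) + 1) := by
          have hnat := Nat.add_one_mul_choose_eq s.card j
          have h' := congrArg (fun x : ℕ => (x : ℝ)) hnat
          push_cast at h'
          linarith [h']
        rw [div_eq_div_iff hc3 hm1]
        field_simp
        linear_combination (Ee lam s (j + 1)) * (s.card.choose j : ℝ) * idA +
          lam a * Ee lam s j * (s.card.choose (j + 1) : ℝ) * idB
      · subst hjm
        rw [Ee_eq_zero lam (Nat.lt_succ_self _)]
        simp only [Nat.choose_self, Nat.cast_one, sub_self, zero_mul, zero_add, div_one]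
        field_simp
      · rw [Ee_eq_zero lam (by omega : s.card < j + 1), Ee_eq_zero lam (by omega : s.card < j)]
        simp
    intro j
    by_cases hbig : s.card < j + 1
    · rw [Pp_eq_zero lam (by omega : (insert a s).card < j + 2)]
      have := sq_nonneg (Pp lam (insert a s) (j + 1))
      simpa using this
    push_neg at hbig
    -- now j + 1 ≤ s.card
    have hm1pos : (0:ℝ) < (s.card : ℝ) + 1 := by positivity
    match j with
    | 0 =>
      have hm1 : 1 ≤ s.card := by omega
      have hk := key_alg (s.card : ℝ) 1 (lam a) (Pp lam s 1) 1 (Pp lam s 2) 0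
        (by exact_mod_cast hm1) le_rfl hb.le (Pp_nonneg lam hposs 1) zero_le_one
        (Pp_nonneg lam hposs 2) le_rfl
        (by simpa [Pp_zero] using ih 0) (by norm_num)
        (by simpa using mul_nonneg (Pp_nonneg lam hposs 1) zero_le_one)
      rw [hq 1, hq 0, Pp_zero, Pp_zero]
      rw [div_pow, mul_one, div_le_div_iff₀ hm1pos (by positivity)]
      norm_num
      nlinarith [hk, hm1pos]
    | (j' + 1) =>
      -- j' + 2 ≤ s.card
      have hA : (1:ℝ) ≤ (s.card : ℝ) - (j' + 1) := by
        have : j' + 2 ≤ s.card := by omega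
        have := Nat.cast_le (α := ℝ) |>.mpr this
        push_cast at this ⊢
        linarith
      have hk := key_alg ((s.card : ℝ) - (j' + 1)) ((j' : ℝ) + 2) (lam a)
        (Pp lam s (j' + 2)) (Pp lam s (j' + 1)) (Pp lam s (j' + 3)) (Pp lam s j')
        hA (by push_cast; linarith [Nat.cast_nonneg (α := ℝ) j']) hb.le
        (Pp_nonneg lam hposs _) (Pp_nonneg lam hposs _) (Pp_nonneg lam hposs _)
        (Pp_nonneg lam hposs _)
        (ih (j' + 1)) (ih j') (Pp_ratio lam hposs ih j')
      rw [hq (j' + 2), hq (j' + 1), hq j']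
      have e1 : Pp lam s (j' + 2 + 1) = Pp lam s (j' + 3) :=
        congrArg (Pp lam s) (by omega)
      have e2 : Pp lam s (j' + 1 + 1) = Pp lam s (j' + 2) :=
        congrArg (Pp lam s) (by omega)
      rw [e1, e2, div_pow, div_mul_div_comm, div_le_div_iff₀ (by positivity) (by positivity)]
      push_cast
      nlinarith [hk, hm1pos, sq_nonneg ((s.card : ℝ) + 1)]


lemma esymmS_eq (k : ℕ) : esymmS n (k : ℤ) lam = Ee lam Finset.univ k := by
  simp [esymmS, Ee]

lemma esymmSDel_eq (k : ℕ) (i : Fin n) :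
    esymmSDel n (k : ℤ) lam i = Ee lam (Finset.univ.erase i) k := by
  simp [esymmSDel, Ee]

lemma del_rec (i : Fin n) (j : ℤ) :
    esymmS n j lam = esymmSDel n j lam i + lam i * esymmSDel n (j - 1) lam i := by
  rcases lt_trichotomy j 0 with hj | hj | hj
  · rw [esymmS, esymmSDel, esymmSDel, if_pos hj, if_pos hj, if_pos (by omega : j - 1 < 0)]
    ring
  · subst hj
    rw [esymmS, esymmSDel, esymmSDel, if_neg (by omega), if_neg (by omega),
      if_pos (by omega : (0:ℤ) - 1 < 0)]
    norm_num [Finset.powersetCard_zero]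
  · obtain ⟨j', rfl⟩ : ∃ j' : ℕ, j = (j' : ℤ) + 1 := ⟨(j - 1).toNat, by omega⟩
    have h1 : ((j' : ℤ) + 1).toNat = j' + 1 := by omega
    have h2 : ((j' : ℤ) + 1 - 1).toNat = j' := by omega
    rw [esymmS, esymmSDel, esymmSDel, if_neg (by omega), if_neg (by omega), if_neg (by omega),
      h1]
    have h3 : ((j' : ℤ) + 1 - 1) = (j' : ℤ) := by ring
    rw [h3]
    have h4 : ((j' : ℤ)).toNat = j' := by omega
    rw [h4]
    have hins : insert i (Finset.univ.erase i) = (Finset.univ : Finset (Fin n)) :=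
      Finset.insert_erase (Finset.mem_univ i)
    have := Ee_insert lam (Finset.notMem_erase i Finset.univ) (j := j')
    rw [hins] at this
    exact this

lemma sum_del (j : ℕ) :
    ∑ i, Ee lam (Finset.univ.erase i) j = ((n : ℝ) - j) * Ee lam Finset.univ j := by
  rcases le_or_gt j n with hj | hj
  · have hfilter : ∀ i : Fin n, (Finset.univ.erase i).powersetCard j =
        (Finset.univ.powersetCard j).filter (fun t => i ∉ t) := by
      intro i
      ext t
      simp only [Finset.mem_powersetCard, Finset.mem_filter, Finset.subset_erase]
      tauto
    calc ∑ i, Ee lam (Finset.univ.erase i) j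
        = ∑ i : Fin n, ∑ t ∈ (Finset.univ.powersetCard j).filter (fun t => i ∉ t),
            ∏ l ∈ t, lam l := by
          apply Finset.sum_congr rfl
          intro i _
          rw [Ee, hfilter i]
      _ = ∑ i : Fin n, ∑ t ∈ Finset.univ.powersetCard j,
            if i ∉ t then ∏ l ∈ t, lam l else 0 := by
          apply Finset.sum_congr rfl
          intro i _
          rw [Finset.sum_filter]
      _ = ∑ t ∈ Finset.univ.powersetCard j, ∑ i : Fin n,
            if i ∉ t then ∏ l ∈ t, lam l else 0 := Finset.sum_comm
      _ = ∑ t ∈ Finset.univ.powersetCard j, ((n : ℝ) - j) * ∏ l ∈ t, lam l := by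
          apply Finset.sum_congr rfl
          intro t ht
          rw [Finset.mem_powersetCard] at ht
          rw [Finset.sum_ite, Finset.sum_const, Finset.sum_const, smul_zero, add_zero]
          have hcompl : (Finset.univ.filter (fun i : Fin n => i ∉ t)) = tᶜ := by
            ext i; simp
          rw [hcompl, Finset.card_compl, Fintype.card_fin, ht.2, nsmul_eq_mul,
            Nat.cast_sub hj]
      _ = ((n : ℝ) - j) * Ee lam Finset.univ j := by rw [Ee, Finset.mul_sum]
  · have h1 : ∀ i : Fin n, Ee lam (Finset.univ.erase i) j = 0 := by
      intro i
      apply Ee_eq_zero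
      have : (Finset.univ.erase i).card = n - 1 := by
        rw [Finset.card_erase_of_mem (Finset.mem_univ i), Finset.card_univ, Fintype.card_fin]
      omega
    rw [Ee_eq_zero lam (by simpa [Finset.card_univ] using hj)]
    simp [h1]


lemma pointwise (i : Fin n) (k : ℤ) :
    lam i ^ 2 * ((esymmSDel n (k - 1) lam i) ^ 2 -
        esymmSDel n k lam i * esymmSDel n (k - 2) lam i) =
      esymmS n k lam * (esymmS n k lam - esymmSDel n k lam i) -
        esymmS n (k - 1) lam * (esymmS n (k + 1) lam - esymmSDel n (k + 1) lam i) := by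
  have e1 := del_rec lam i k
  have e2 := del_rec lam i (k - 1)
  have e3 := del_rec lam i (k + 1)
  rw [show k - 1 - 1 = k - 2 by ring] at e2
  rw [show k + 1 - 1 = k by ring] at e3
  linear_combination (-(lam i * esymmSDel n (k - 1) lam i + esymmS n k lam)) * e1 +
    lam i * esymmSDel n k lam i * e2 + esymmS n (k - 1) lam * e3

end DQkAux

open DQkAux

/-- Inequality (3.5): `∑_i λ_i² (S_{k-1,i}² − S_{k,i} S_{k-2,i}) ≥ (k/(n−k+1)) S_k²`,
i.e. `∑_i (∂Q_k/∂λ_i) λ_i² ≥ (k/(n−k+1)) Q_k²` after dividing by `S_{k-1}²`. -/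
theorem sum_dQk_lambda_sq_ge (n k : ℕ) (hn : 1 ≤ n) (hk1 : 1 ≤ k) (hkn : k ≤ n)
    (lam : Fin n → ℝ) (hpos : ∀ i, 0 < lam i) :
    (k : ℝ) / ((n : ℝ) - (k : ℝ) + 1) * (esymmS n (k : ℤ) lam) ^ 2 ≤
      ∑ i, (lam i) ^ 2 *
        ((esymmSDel n ((k : ℤ) - 1) lam i) ^ 2 -
          esymmSDel n (k : ℤ) lam i * esymmSDel n ((k : ℤ) - 2) lam i) := by
  have hposs : ∀ i ∈ (Finset.univ : Finset (Fin n)), 0 < lam i := fun i _ => hpos i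
  have hcardu : (Finset.univ : Finset (Fin n)).card = n := by simp
  -- notation
  set Ek : ℝ := Ee lam Finset.univ k with hEk
  set Em : ℝ := Ee lam Finset.univ (k - 1) with hEm
  set Ep : ℝ := Ee lam Finset.univ (k + 1) with hEp
  -- step 1: rewrite the sum
  have hpt : ∀ i : Fin n,
      (lam i) ^ 2 * ((esymmSDel n ((k : ℤ) - 1) lam i) ^ 2 -
          esymmSDel n (k : ℤ) lam i * esymmSDel n ((k : ℤ) - 2) lam i) =
        Ek * (Ek - Ee lam (Finset.univ.erase i) k) -
          Em * (Ep - Ee lam (Finset.univ.erase i) (k + 1)) := by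
    intro i
    rw [pointwise lam i (k : ℤ)]
    rw [show (k : ℤ) - 1 = ((k - 1 : ℕ) : ℤ) by omega,
      show (k : ℤ) + 1 = ((k + 1 : ℕ) : ℤ) by push_cast; ring,
      esymmS_eq, esymmS_eq, esymmS_eq, esymmSDel_eq, esymmSDel_eq]
  have hsum : ∑ i, (lam i) ^ 2 *
      ((esymmSDel n ((k : ℤ) - 1) lam i) ^ 2 -
        esymmSDel n (k : ℤ) lam i * esymmSDel n ((k : ℤ) - 2) lam i) =
      (k : ℝ) * Ek ^ 2 - ((k : ℝ) + 1) * Em * Ep := by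
    rw [Finset.sum_congr rfl (fun i _ => hpt i)]
    rw [Finset.sum_sub_distrib, ← Finset.mul_sum, ← Finset.mul_sum,
      Finset.sum_sub_distrib, Finset.sum_sub_distrib, Finset.sum_const, Finset.sum_const,
      Finset.card_univ, Fintype.card_fin, sum_del lam k, sum_del lam (k + 1)]
    push_cast
    ring
  rw [hsum, esymmS_eq, ← hEk]
  -- final inequality
  rcases eq_or_lt_of_le hkn with hkeq | hklt
  · -- k = n : Ep = 0
    have hEp0 : Ep = 0 := by
      rw [hEp]
      exact Ee_eq_zero lam (by omega)
    have hd : (n : ℝ) - k + 1 = 1 := by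
      rw [hkeq]; ring
    rw [hEp0, hd, div_one]
    ring_nf
    exact le_refl _
  · -- k < n : Newton's inequality
    have hk0 : k - 1 + 2 = k + 1 := by omega
    have hk2 : k - 1 + 1 = k := by omega
    have hlc := Pp_lc lam hpos Finset.univ (k - 1)
    rw [hk0, hk2] at hlc
    have hC0 : (0:ℝ) < (n.choose k : ℝ) := by exact_mod_cast Nat.choose_pos hkn
    have hCp : (0:ℝ) < (n.choose (k + 1) : ℝ) := by exact_mod_cast Nat.choose_pos (by omega)
    have hCm : (0:ℝ) < (n.choose (k - 1) : ℝ) := by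
      exact_mod_cast Nat.choose_pos (by omega : k - 1 ≤ n)
    rw [Pp, Pp, Pp, hcardu, ← hEk, ← hEm, ← hEp, div_mul_div_comm, div_pow,
      div_le_div_iff₀ (by positivity) (by positivity)] at hlc
    -- hlc : Ep * Em * (n.choose k)^2 ≤ Ek^2 * (n.choose (k+1) * n.choose (k-1))
    have idA : (n.choose (k + 1) : ℝ) * ((k : ℝ) + 1) = (n.choose k : ℝ) * ((n : ℝ) - k) := by
      have hnat := Nat.choose_succ_right_eq n k
      have h' := congrArg (fun x : ℕ => (x : ℝ)) hnat
      push_cast [Nat.cast_sub hkn] at h'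
      linarith [h']
    have idB : (n.choose k : ℝ) * (k : ℝ) = (n.choose (k - 1) : ℝ) * ((n : ℝ) - k + 1) := by
      have hnat := Nat.choose_succ_right_eq n (k - 1)
      rw [hk2] at hnat
      have h' := congrArg (fun x : ℕ => (x : ℝ)) hnat
      have hs : ((n - (k - 1) : ℕ) : ℝ) = (n : ℝ) - k + 1 := by
        push_cast [Nat.cast_sub (by omega : k - 1 ≤ n)]
        push_cast [Nat.cast_sub hk1]
        ring
      push_cast at h'
      rw [show ((n - (k - 1) : ℕ) : ℝ) = (n : ℝ) - k + 1 from hs] at h'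
      -- h' : n.choose k * k = n.choose (k-1) * ((n:ℝ) - k + 1)  (up to cast of k-1+1?)
      linarith [h']
    have hABk : ((k : ℝ) + 1) * ((n : ℝ) - k + 1) * ((n.choose (k + 1) : ℝ) * (n.choose (k - 1) : ℝ)) =
        ((n : ℝ) - k) * (k : ℝ) * (n.choose k : ℝ) ^ 2 := by
      linear_combination ((n.choose (k - 1) : ℝ) * ((n : ℝ) - k + 1)) * idA -
        ((n : ℝ) - (k : ℝ)) * (n.choose k : ℝ) * idB
    have hnk : (0:ℝ) ≤ ((n : ℝ) - k) * k := by
      have hkr : (k : ℝ) ≤ n := by exact_mod_cast hkn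
      exact mul_nonneg (by linarith) (Nat.cast_nonneg k)
    have hcancel : ((k : ℝ) + 1) * ((n : ℝ) - k + 1) * (Em * Ep) ≤
        (k : ℝ) * ((n : ℝ) - k) * Ek ^ 2 := by
      have step : ((k : ℝ) + 1) * ((n : ℝ) - k + 1) * (Em * Ep) *
          ((n.choose (k + 1) : ℝ) * (n.choose (k - 1) : ℝ)) ≤
          (k : ℝ) * ((n : ℝ) - k) * Ek ^ 2 * ((n.choose (k + 1) : ℝ) * (n.choose (k - 1) : ℝ)) := by
        calc ((k : ℝ) + 1) * ((n : ℝ) - k + 1) * (Em * Ep) *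
              ((n.choose (k + 1) : ℝ) * (n.choose (k - 1) : ℝ))
            = ((n : ℝ) - k) * (k : ℝ) * (Ep * Em * (n.choose k : ℝ) ^ 2) := by
              linear_combination (Em * Ep) * hABk
          _ ≤ ((n : ℝ) - k) * (k : ℝ) * (Ek ^ 2 * ((n.choose (k + 1) : ℝ) * (n.choose (k - 1) : ℝ))) := by
              apply mul_le_mul_of_nonneg_left hlc hnk
          _ = (k : ℝ) * ((n : ℝ) - k) * Ek ^ 2 * ((n.choose (k + 1) : ℝ) * (n.choose (k - 1) : ℝ)) := by
              ring
      exact le_of_mul_le_mul_right step (by positivity)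
    have hd : (0:ℝ) < (n : ℝ) - k + 1 := by
      have : (k : ℝ) ≤ n := by exact_mod_cast hkn
      linarith
    rw [div_mul_eq_mul_div, div_le_iff₀ hd]
    nlinarith [hcancel]
end

section
/- Let n ≥ 2, let 1 ≤ k ≤ n be an integer, and let μ ∈ ℝ^{n−1} have all entries positive. Then S_{k-1}^{n-1}(μ)² − S_k^{n-1}(μ) · S_{k-2}^{n-1}(μ) ≥ (n/(k(n−k+1))) · S_{k-1}^{n-1}(μ)². -/
/-- ℤ-indexed elementary symmetric polynomial over a finite index set. -/
noncomputable def Es {ι : Type*} (f : ι → ℝ) (s : Finset ι) (j : ℤ) : ℝ :=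
  if j < 0 then 0 else ∑ t ∈ s.powersetCard j.toNat, ∏ i ∈ t, f i

lemma Es_neg {ι : Type*} (f : ι → ℝ) (s : Finset ι) {j : ℤ} (h : j < 0) : Es f s j = 0 :=
  if_pos h

lemma Es_zero {ι : Type*} (f : ι → ℝ) (s : Finset ι) : Es f s 0 = 1 := by
  simp [Es]

lemma Es_eq_zero_of_lt {ι : Type*} (f : ι → ℝ) (s : Finset ι) {j : ℤ}
    (h : (s.card : ℤ) < j) : Es f s j = 0 := by
  rw [Es, if_neg (by omega), Finset.powersetCard_eq_empty.mpr (by omega), Finset.sum_empty]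

lemma Es_nonneg {ι : Type*} (f : ι → ℝ) (s : Finset ι) (hf : ∀ i ∈ s, 0 ≤ f i) (j : ℤ) :
    0 ≤ Es f s j := by
  rw [Es]
  split
  · exact le_rfl
  · exact Finset.sum_nonneg fun t ht => Finset.prod_nonneg fun i hi =>
      hf i ((Finset.mem_powersetCard.mp ht).1 hi)

lemma Es_pos {ι : Type*} (f : ι → ℝ) (s : Finset ι) (hf : ∀ i ∈ s, 0 < f i) {j : ℤ}
    (h0 : 0 ≤ j) (h1 : j ≤ (s.card : ℤ)) : 0 < Es f s j := by
  rw [Es, if_neg (by omega)]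
  refine Finset.sum_pos (fun t ht => Finset.prod_pos fun i hi =>
    hf i ((Finset.mem_powersetCard.mp ht).1 hi)) ?_
  exact Finset.powersetCard_nonempty.mpr (by omega)

lemma Es_cons {ι : Type*} [DecidableEq ι] (f : ι → ℝ) {a : ι} {s : Finset ι} (ha : a ∉ s)
    (j : ℤ) : Es f (Finset.cons a s ha) j = Es f s j + f a * Es f s (j - 1) := by
  rcases lt_trichotomy j 0 with h | h | h
  · rw [Es_neg _ _ h, Es_neg _ _ h, Es_neg _ _ (by omega), mul_zero, add_zero]
  · rw [h, Es_zero, Es_zero, show (0:ℤ) - 1 = -1 by ring, Es_neg _ _ (by norm_num),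
      mul_zero, add_zero]
  · obtain ⟨m, rfl⟩ : ∃ m : ℕ, j = (m : ℤ) + 1 := ⟨(j - 1).toNat, by omega⟩
    rw [show ((m:ℤ) + 1) - 1 = (m:ℤ) by ring]
    rw [Es, Es, Es, if_neg (by omega), if_neg (by omega), if_neg (by omega),
      show ((m:ℤ) + 1).toNat = m + 1 by omega, show ((m:ℤ)).toNat = m by omega]
    rw [Finset.cons_eq_insert, show m + 1 = Nat.succ m from rfl,
      Finset.powersetCard_succ_insert ha]
    rw [Finset.sum_union ?disj]
    case disj =>
      rw [Finset.disjoint_right]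
      intro t htimg htmem
      obtain ⟨u, hu, rfl⟩ := Finset.mem_image.mp htimg
      exact ha ((Finset.mem_powersetCard.mp htmem).1 (Finset.mem_insert_self _ _))
    rw [Finset.sum_image ?inj]
    case inj =>
      intro t ht u hu htu
      have hat : a ∉ t := fun hc => ha ((Finset.mem_powersetCard.mp ht).1 hc)
      have hau : a ∉ u := fun hc => ha ((Finset.mem_powersetCard.mp hu).1 hc)
      rw [← Finset.erase_insert hat, ← Finset.erase_insert hau, htu]
    congr 1
    rw [Finset.mul_sum]
    refine Finset.sum_congr rfl fun t ht => ?_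
    have hat : a ∉ t := fun hc => ha ((Finset.mem_powersetCard.mp ht).1 hc)
    rw [Finset.prod_insert hat]

/-- Pure algebra for the inductive step. -/
lemma step_ineq (p q t e0 e1 e2 e3 : ℝ) (hp : 1 ≤ p) (hq : 1 ≤ q) (ht : 0 ≤ t)
    (he0 : 0 ≤ e0) (he3 : 0 ≤ e3) (he1 : 0 < e1) (he2 : 0 < e2)
    (IH1 : p * (q + 1) * (e2 * e0) ≤ (p - 1) * q * e1 ^ 2)
    (IH2 : (p + 1) * q * (e3 * e1) ≤ p * (q - 1) * e2 ^ 2) :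
    (p + 1) * (q + 1) * ((e3 + t * e2) * (e1 + t * e0)) ≤ p * q * (e2 + t * e1) ^ 2 := by
  have hp0 : 0 < p := by linarith
  have hq0 : 0 < q := by linarith
  have hW : (p + 1) * (q + 1) * (e3 * e0) ≤ (p - 1) * (q - 1) * (e2 * e1) := by
    have hc : 0 ≤ (p + 1) * q * (e3 * e1) :=
      mul_nonneg (mul_nonneg (by linarith) hq0.le) (mul_nonneg he3 he1.le)
    have hb : 0 ≤ (p - 1) * q * e1 ^ 2 :=
      mul_nonneg (mul_nonneg (by linarith) hq0.le) (sq_nonneg _)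
    have hmul := mul_le_mul IH1 IH2 hc hb
    have hpq : 0 < p * q * (e1 * e2) := mul_pos (mul_pos hp0 hq0) (mul_pos he1 he2)
    refine le_of_mul_le_mul_left ?_ hpq
    nlinarith [hmul]
  have hA : q * e1 ^ 2 ≤ p * (p * q * e1 ^ 2 - (p + 1) * (q + 1) * (e2 * e0)) := by
    nlinarith [mul_le_mul_of_nonneg_left IH1 (by linarith : (0:ℝ) ≤ p + 1)]
  have hC : p * e2 ^ 2 ≤ q * (p * q * e2 ^ 2 - (p + 1) * (q + 1) * (e3 * e1)) := by
    nlinarith [mul_le_mul_of_nonneg_left IH2 (by linarith : (0:ℝ) ≤ q + 1)]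
  have hB : 0 ≤ 2 * p * q * (e2 * e1) - (p + 1) * (q + 1) * (e3 * e0 + e2 * e1)
      + 2 * (e2 * e1) := by nlinarith [hW]
  have hX1 := mul_le_mul_of_nonneg_left hA (mul_nonneg hq0.le (sq_nonneg t))
  have hX2 := mul_le_mul_of_nonneg_left hC hp0.le
  have hX3 := mul_nonneg (mul_nonneg (mul_pos hp0 hq0).le ht) hB
  nlinarith [hX1, hX2, hX3, sq_nonneg (q * e1 * t - p * e2), mul_pos hp0 hq0]

/-- Newton's inequality in explicit integer-coefficient form. -/
lemma newton_main {ι : Type*} [DecidableEq ι] (s : Finset ι) :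
    ∀ f : ι → ℝ, (∀ i ∈ s, 0 < f i) → ∀ k : ℤ, 1 ≤ k → k ≤ (s.card : ℤ) + 1 →
      (k : ℝ) * ((s.card : ℝ) - (k : ℝ) + 2) * (Es f s k * Es f s (k - 2)) ≤
        ((k : ℝ) - 1) * ((s.card : ℝ) - (k : ℝ) + 1) * Es f s (k - 1) ^ 2 := by
  induction s using Finset.cons_induction with
  | empty =>
    intro f _ k hk1 hk2
    have hk : k = 1 := by simp only [Finset.card_empty, Nat.cast_zero] at hk2; omega
    subst hk
    rw [Es_neg _ _ (show (1:ℤ) - 2 < 0 by norm_num)]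
    norm_num
  | cons a s ha ih =>
    intro f hf k hk1 hk2
    have ht : 0 < f a := hf a (Finset.mem_cons_self a s)
    have hfs : ∀ i ∈ s, 0 < f i := fun i hi => hf i (Finset.mem_cons.mpr (Or.inr hi))
    rw [Finset.card_cons] at hk2 ⊢
    simp only [Es_cons f ha]
    rw [show k - 1 - 1 = k - 2 by ring, show k - 2 - 1 = k - 3 by ring]
    push_cast
    by_cases hk1' : k = 1
    · subst hk1'
      rw [Es_neg f s (show (1:ℤ) - 2 < 0 by norm_num),
        Es_neg f s (show (1:ℤ) - 3 < 0 by norm_num)]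
      push_cast
      norm_num
    by_cases hkM : k = (s.card : ℤ) + 2
    · subst hkM
      rw [Es_eq_zero_of_lt f s (by omega), Es_eq_zero_of_lt f s (show (s.card:ℤ) < _ by omega)]
      push_cast
      ring_nf
      nlinarith [sq_nonneg (Es f s ((s.card:ℤ) + 2 - 2) + f a * Es f s ((s.card:ℤ) + 2 - 3))]
    -- main case : 2 ≤ k ≤ s.card + 1
    have hk2' : 2 ≤ k := by omega
    have hkM' : k ≤ (s.card : ℤ) + 1 := by omega
    have IH1 := ih f hfs (k - 1) (by omega) (by omega)
    have IH2 := ih f hfs k hk1 (by omega)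
    rw [show k - 1 - 2 = k - 3 by ring, show k - 1 - 1 = k - 2 by ring] at IH1
    push_cast at IH1 IH2
    have he2 : 0 < Es f s (k - 1) := Es_pos f s hfs (by omega) (by omega)
    have he1 : 0 < Es f s (k - 2) := Es_pos f s hfs (by omega) (by omega)
    have he3 : 0 ≤ Es f s k := Es_nonneg f s (fun i hi => (hfs i hi).le) k
    have he0 : 0 ≤ Es f s (k - 3) := Es_nonneg f s (fun i hi => (hfs i hi).le) _
    have hkR : (2:ℝ) ≤ (k:ℝ) := by exact_mod_cast hk2'
    have hkMR : (k:ℝ) ≤ (s.card : ℝ) + 1 := by exact_mod_cast hkM'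
    have key := step_ineq ((k:ℝ) - 1) ((s.card : ℝ) - (k:ℝ) + 2) (f a)
      (Es f s (k - 3)) (Es f s (k - 2)) (Es f s (k - 1)) (Es f s k)
      (by linarith) (by linarith) ht.le he0 he3 he1 he2 (by nlinarith [IH1]) (by nlinarith [IH2])
    nlinarith [key]

/-- Newton-type inequality with explicit constant:
`S_{k-1}² − S_k S_{k-2} ≥ (n/(k(n−k+1))) S_{k-1}²` on `ℝ^{n-1}` with positive entries. -/
theorem newton_type_inequality (n k : ℕ) (hn : 2 ≤ n) (hk1 : 1 ≤ k) (hkn : k ≤ n)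
    (μ : Fin (n - 1) → ℝ) (hpos : ∀ i, 0 < μ i) :
    (n : ℝ) / ((k : ℝ) * ((n : ℝ) - (k : ℝ) + 1)) * (esymmS (n - 1) ((k : ℤ) - 1) μ) ^ 2 ≤
      (esymmS (n - 1) ((k : ℤ) - 1) μ) ^ 2 -
        esymmS (n - 1) (k : ℤ) μ * esymmS (n - 1) ((k : ℤ) - 2) μ := by
  have hcard : (Finset.univ : Finset (Fin (n - 1))).card = n - 1 := by
    simp [Finset.card_univ]
  have hEs : ∀ j : ℤ, Es μ (Finset.univ : Finset (Fin (n - 1))) j = esymmS (n - 1) j μ :=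
    fun j => rfl
  have hmain := newton_main (Finset.univ : Finset (Fin (n - 1))) μ (fun i _ => hpos i)
    (k : ℤ) (by exact_mod_cast hk1) (by rw [hcard]; omega)
  rw [hcard, hEs, hEs, hEs] at hmain
  have hcast : ((n - 1 : ℕ) : ℝ) = (n : ℝ) - 1 := by
    have : 1 ≤ n := by omega
    push_cast [this]
    ring
  rw [hcast] at hmain
  push_cast at hmain
  have hKpos : (0:ℝ) < (k : ℝ) := by exact_mod_cast hk1
  have hknR : (k : ℝ) ≤ (n : ℝ) := by exact_mod_cast hkn
  have hD : (0:ℝ) < (k : ℝ) * ((n : ℝ) - (k : ℝ) + 1) := mul_pos hKpos (by linarith)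
  rw [div_mul_eq_mul_div, div_le_iff₀ hD]
  nlinarith [hmain]
end

section
/- Let n ≥ 1, m > 0, a ∈ ℝ, and c, d ∈ ℝ^n with d_i ≥ m for all 1 ≤ i ≤ n, and suppose a ≥ m + (2/m)·∑_{i=1}^n c_i². Then every eigenvalue of the symmetric arrowhead matrix B(a, c, d) is strictly greater than m/2; equivalently, B(a, c, d) − (m/2)·I is positive definite. -/
/-- The symmetric arrowhead matrix `B(a, c, d)`: `B_{00} = a`,
`B_{0i} = B_{i0} = c_i`, `B_{ii} = d_i`, and `B_{ij} = 0` for distinct `i, j ≥ 1`. -/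
noncomputable def arrowhead (n : ℕ) (a : ℝ) (c d : Fin n → ℝ) :
    Matrix (Fin (n + 1)) (Fin (n + 1)) ℝ :=
  Matrix.of fun i j =>
    Fin.cases (motive := fun _ => ℝ)
      (Fin.cases (motive := fun _ => ℝ) a (fun j' => c j') j)
      (fun i' => Fin.cases (motive := fun _ => ℝ) (c i')
        (fun j' => if i' = j' then d i' else 0) j) i

open Matrix in
lemma arrowhead_quad (n : ℕ) (a lam : ℝ) (c d : Fin n → ℝ) (x : Fin (n+1) → ℝ) :
    x ⬝ᵥ ((arrowhead n a c d) - lam • (1 : Matrix (Fin (n + 1)) (Fin (n + 1)) ℝ)) *ᵥ x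
      = (a - lam) * x 0 ^ 2 + 2 * x 0 * ∑ i, c i * x i.succ
          + ∑ i, (d i - lam) * x i.succ ^ 2 := by
  simp [dotProduct, Matrix.mulVec, arrowhead, Fin.sum_univ_succ, Matrix.one_apply,
    Finset.mul_sum, mul_ite, Finset.sum_ite_eq, sub_mul, mul_sub, Finset.sum_sub_distrib,
    mul_add, add_mul, Finset.sum_add_distrib]
  ring_nf
  simp only [two_mul, sq, add_mul, mul_add, Finset.sum_add_distrib, mul_comm, mul_left_comm,
    mul_assoc]
  ring

open Matrix in
lemma arrowhead_posdef (n : ℕ) (m a lam : ℝ) (hm : 0 < m)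
    (c d : Fin n → ℝ) (hd : ∀ i, m ≤ d i)
    (ha : m + (2 / m) * ∑ i, (c i) ^ 2 ≤ a) (hlam : lam ≤ m / 2) :
    ((arrowhead n a c d) - lam • (1 : Matrix (Fin (n + 1)) (Fin (n + 1)) ℝ)).PosDef := by
  refine Matrix.posDef_iff_dotProduct_mulVec.mpr ⟨?_, ?_⟩
  · ext i j
    simp only [Matrix.conjTranspose_apply, star_trivial, Matrix.sub_apply, Matrix.smul_apply,
      Matrix.one_apply, arrowhead, Matrix.of_apply]
    induction i using Fin.cases with
    | zero => induction j using Fin.cases with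
      | zero => simp
      | succ j' => simp [(Fin.succ_ne_zero j').symm, Fin.succ_ne_zero j']
    | succ i' => induction j using Fin.cases with
      | zero => simp [(Fin.succ_ne_zero i').symm, Fin.succ_ne_zero i']
      | succ j' =>
        rcases eq_or_ne i' j' with h | h
        · subst h; simp
        · simp [h, h.symm, fun h' => h (Fin.succ_injective _ h').symm,
            fun h' => h (Fin.succ_injective _ h')]
  · intro x hx
    simp only [star_trivial]
    rw [arrowhead_quad]
    have hdl : ∀ i, m / 2 ≤ d i - lam := fun i => by linarith [hd i]
    by_cases hx0 : x 0 = 0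
    · obtain ⟨i₀, hi₀⟩ : ∃ i : Fin n, x i.succ ≠ 0 := by
        by_contra h
        push_neg at h
        apply hx
        funext k
        induction k using Fin.cases with
        | zero => exact hx0
        | succ k' => exact h k'
      rw [hx0]
      have hpos : 0 < ∑ i, (d i - lam) * x i.succ ^ 2 := by
        refine Finset.sum_pos' (fun i _ => ?_) ⟨i₀, Finset.mem_univ _, ?_⟩
        · exact mul_nonneg (by linarith [hdl i]) (sq_nonneg _)
        · exact mul_pos (by linarith [hdl i₀])
            (lt_of_le_of_ne (sq_nonneg _) (Ne.symm (pow_ne_zero 2 hi₀)))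
      simpa using hpos
    · have hx2 : 0 < x 0 ^ 2 :=
        lt_of_le_of_ne (sq_nonneg _) (Ne.symm (pow_ne_zero 2 hx0))
      set S2 := ∑ i, (c i) ^ 2 with hS2
      have hS2nn : 0 ≤ S2 := Finset.sum_nonneg fun i _ => sq_nonneg _
      have hA : m / 2 + (2 / m) * S2 ≤ a - lam := by linarith
      have hterm : ∀ i ∈ Finset.univ,
          -((2 / m) * (c i) ^ 2 * x 0 ^ 2) ≤
            2 * (c i * (x 0 * x i.succ)) + (d i - lam) * x i.succ ^ 2 := by
        intro i _
        have h1 := hdl i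
        have hsq : 0 ≤ 2 / m * (c i * x 0 + m / 2 * x i.succ) ^ 2 := by positivity
        have hexp : 2 / m * (c i * x 0 + m / 2 * x i.succ) ^ 2
            = 2 / m * (c i) ^ 2 * x 0 ^ 2 + 2 * (c i * (x 0 * x i.succ))
              + m / 2 * x i.succ ^ 2 := by
          field_simp
          ring
        nlinarith [sq_nonneg (x i.succ), mul_le_mul_of_nonneg_right h1 (sq_nonneg (x i.succ))]
      have hsum : -((2 / m) * S2 * x 0 ^ 2) ≤
          2 * x 0 * (∑ i, c i * x i.succ) + ∑ i, (d i - lam) * x i.succ ^ 2 := by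
        have := Finset.sum_le_sum hterm
        simp only [Finset.sum_add_distrib, ← Finset.sum_neg_distrib] at this
        calc -((2 / m) * S2 * x 0 ^ 2)
            = ∑ i, -((2 / m) * (c i) ^ 2 * x 0 ^ 2) := by
              rw [hS2, Finset.mul_sum, Finset.sum_mul, ← Finset.sum_neg_distrib]
          _ ≤ ∑ i, (2 * (c i * (x 0 * x i.succ)) + (d i - lam) * x i.succ ^ 2) :=
              Finset.sum_le_sum hterm
          _ = 2 * x 0 * (∑ i, c i * x i.succ) + ∑ i, (d i - lam) * x i.succ ^ 2 := by
              rw [Finset.sum_add_distrib, Finset.mul_sum]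
              congr 1
              congr 1; funext i; ring
      nlinarith [hsum, mul_le_mul_of_nonneg_right hA hx2.le, hx2, hm.le, hS2nn]

/-- Quantitative lower eigenvalue bound (Claim 5.2): if `d_i ≥ m` and
`a ≥ m + (2/m) ∑ c_i²`, then every eigenvalue of `B(a,c,d)` exceeds `m/2`;
equivalently `B(a,c,d) − (m/2)I` is positive definite. -/
theorem arrowhead_eigenvalues_lower_bound (n : ℕ) (hn : 1 ≤ n) (m a : ℝ) (hm : 0 < m)
    (c d : Fin n → ℝ) (hd : ∀ i, m ≤ d i)
    (ha : m + (2 / m) * ∑ i, (c i) ^ 2 ≤ a) :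
    (∀ lam : ℝ,
        ((arrowhead n a c d) - lam • (1 : Matrix (Fin (n + 1)) (Fin (n + 1)) ℝ)).det = 0 →
        m / 2 < lam) ∧
      ((arrowhead n a c d) - (m / 2) • (1 : Matrix (Fin (n + 1)) (Fin (n + 1)) ℝ)).PosDef := by
  constructor
  · intro lam hdet
    by_contra h
    push_neg at h
    exact (arrowhead_posdef n m a lam hm c d hd ha h).det_pos.ne' hdet
  · exact arrowhead_posdef n m a (m / 2) hm c d hd ha le_rfl
end

section
/- Let n ≥ 1 and fix c, d ∈ ℝ^n; let d_(1) ≤ ⋯ ≤ d_(n) denote the entries of d arranged in increasing order. For a ∈ ℝ, let μ_1(a) ≤ ⋯ ≤ μ_{n+1}(a) denote the eigenvalues of the symmetric arrowhead matrix B(a, c, d), listed with multiplicity. Then, as a → +∞, μ_i(a) → d_(i) for each 1 ≤ i ≤ n, and μ_{n+1}(a) − a → 0. -/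
open Filter Polynomial Finset

section lemmas
variable {n : ℕ} {a : ℝ} {c d : Fin n → ℝ}

@[simp] lemma arrowhead_00 : arrowhead n a c d 0 0 = a := rfl
@[simp] lemma arrowhead_0s (j : Fin n) : arrowhead n a c d 0 j.succ = c j := by
  simp [arrowhead]
@[simp] lemma arrowhead_s0 (i : Fin n) : arrowhead n a c d i.succ 0 = c i := by
  simp [arrowhead]
@[simp] lemma arrowhead_ss (i j : Fin n) :
    arrowhead n a c d i.succ j.succ = if i = j then d i else 0 := by
  simp [arrowhead]

lemma eval_charmatrix_map {N : Type*} [Fintype N] [DecidableEq N]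
    (M : Matrix N N ℝ) (x : ℝ) :
    (Matrix.charmatrix M).map (eval x) =
      Matrix.of fun i j => (if i = j then x else 0) - M i j := by
  ext i j
  by_cases h : i = j
  · subst h; simp [Matrix.charmatrix_apply, Matrix.diagonal_apply]
  · simp [Matrix.charmatrix_apply, Matrix.diagonal_apply, h]

lemma arrowhead_charpoly (n : ℕ) (a : ℝ) (c d : Fin n → ℝ) :
    (arrowhead n a c d).charpoly =
      (X - C a) * ∏ i, (X - C (d i)) -
        ∑ i, C (c i ^ 2) * ∏ j ∈ Finset.univ.erase i, (X - C (d j)) := by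
  apply Polynomial.eq_of_infinite_eval_eq
  apply Set.Infinite.mono (s := (Set.range d)ᶜ)
  swap
  · exact Set.Finite.infinite_compl (Set.finite_range d)
  intro x hx
  have hxd : ∀ i, x - d i ≠ 0 := by
    intro i h
    exact hx ⟨i, by linarith [sub_eq_zero.mp h]⟩
  simp only [Set.mem_setOf_eq]
  have hrhs : eval x ((X - C a) * ∏ i, (X - C (d i)) -
      ∑ i, C (c i ^ 2) * ∏ j ∈ Finset.univ.erase i, (X - C (d j))) =
      (x - a) * ∏ i, (x - d i) - ∑ i, (c i ^ 2) * ∏ j ∈ Finset.univ.erase i, (x - d j) := by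
    simp [eval_prod, eval_finset_sum]
  rw [hrhs]
  set N₀ : Matrix (Fin (n+1)) (Fin (n+1)) ℝ :=
    Matrix.of fun i j => (if i = j then x else 0) - arrowhead n a c d i j with hN₀
  have hlhs : eval x (arrowhead n a c d).charpoly = N₀.det := by
    have h := RingHom.map_det (Polynomial.evalRingHom x) (Matrix.charmatrix (arrowhead n a c d))
    rw [Matrix.charpoly]
    rw [show ((Polynomial.evalRingHom x) (Matrix.charmatrix (arrowhead n a c d)).det) =
      eval x (Matrix.charmatrix (arrowhead n a c d)).det from rfl] at h
    rw [h]
    congr 1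
    rw [show ((Polynomial.evalRingHom x).mapMatrix (Matrix.charmatrix (arrowhead n a c d)) :
        Matrix (Fin (n+1)) (Fin (n+1)) ℝ) =
        (Matrix.charmatrix (arrowhead n a c d)).map (eval x) from rfl]
    rw [eval_charmatrix_map]
  rw [hlhs]
  set w : Fin (n+1) → ℝ := Fin.cases 0 (fun i => c i / (x - d i)) with hw
  set s : Finset (Fin (n+1)) :=
    Finset.univ.map ⟨Fin.succ, Fin.succ_injective n⟩ with hs
  have h0s : (0 : Fin (n+1)) ∉ s := by
    simp only [hs, Finset.mem_map, Finset.mem_univ, Function.Embedding.coeFn_mk, true_and]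
    rintro ⟨i, hi⟩
    exact (Fin.succ_ne_zero i) hi
  have hdet := Matrix.det_updateRow_sum_aux N₀ s h0s w 1
  rw [one_smul, one_smul] at hdet
  set U := N₀.updateRow 0 (N₀ 0 + ∑ k ∈ s, w k • N₀ k) with hU
  rw [← hdet]
  have hU0 : ∀ j, U 0 j = N₀ 0 j + ∑ i : Fin n, (c i / (x - d i)) * N₀ i.succ j := by
    intro j
    rw [hU, Matrix.updateRow_self]
    simp only [Pi.add_apply, Finset.sum_apply, hs, Finset.sum_map,
      Function.Embedding.coeFn_mk, Pi.smul_apply, smul_eq_mul]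
    simp [hw]
  have hUs : ∀ (i : Fin n) j, U i.succ j = N₀ i.succ j := by
    intro i j
    rw [hU, Matrix.updateRow_ne (Fin.succ_ne_zero i)]
  have hN₀ss : ∀ (i j : Fin n), N₀ i.succ j.succ = if i = j then x - d i else 0 := by
    intro i j
    by_cases h : i = j
    · subst h; simp [hN₀]
    · have h2 : i.succ ≠ j.succ := fun hc => h (Fin.succ_injective n hc)
      simp [hN₀, h2, h]
  have hU00 : U 0 0 = (x - a) - ∑ i, c i ^ 2 / (x - d i) := by
    rw [hU0]
    have h1 : N₀ 0 0 = x - a := by simp [hN₀]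
    rw [h1]
    have h2 : ∀ i : Fin n, (c i / (x - d i)) * N₀ i.succ 0 = -(c i ^ 2 / (x - d i)) := by
      intro i
      have h3 : N₀ i.succ 0 = -c i := by simp [hN₀, Fin.succ_ne_zero i]
      rw [h3]; field_simp
    rw [Finset.sum_congr rfl fun i _ => h2 i, Finset.sum_neg_distrib]
    ring
  have hU0s : ∀ j : Fin n, U 0 j.succ = 0 := by
    intro j
    rw [hU0]
    have h1 : N₀ 0 j.succ = -c j := by simp [hN₀, (Fin.succ_ne_zero j).symm]
    have h2 : ∀ i : Fin n, (c i / (x - d i)) * N₀ i.succ j.succ =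
        if i = j then c j else 0 := by
      intro i
      rw [hN₀ss]
      by_cases h : i = j
      · subst h
        rw [if_pos rfl, if_pos rfl, div_mul_cancel₀ _ (hxd i)]
      · simp [h]
    rw [h1, Finset.sum_congr rfl fun i _ => h2 i,
      Finset.sum_ite_eq' Finset.univ j fun _ => c j]
    simp
  rw [Matrix.det_succ_row_zero, Fin.sum_univ_succ]
  have hzero : ∀ j : Fin n,
      (-1 : ℝ) ^ ((j.succ : Fin (n+1)) : ℕ) * U 0 j.succ *
        (U.submatrix Fin.succ (Fin.succAbove j.succ)).det = 0 := by
    intro j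
    rw [hU0s]; ring
  rw [Finset.sum_congr rfl fun j _ => hzero j, Finset.sum_const_zero, add_zero]
  have hsub : U.submatrix Fin.succ ((0 : Fin (n+1)).succAbove) =
      Matrix.diagonal fun i => x - d i := by
    ext i j
    rw [Fin.succAbove_zero]
    simp only [Matrix.submatrix_apply]
    rw [hUs, hN₀ss, Matrix.diagonal_apply]
  rw [hsub, Matrix.det_diagonal, hU00]
  simp only [Fin.val_zero, pow_zero, one_mul]
  rw [sub_mul, Finset.sum_mul]
  congr 1
  refine Finset.sum_congr rfl fun i _ => ?_
  rw [← Finset.mul_prod_erase Finset.univ _ (Finset.mem_univ i)]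
  rw [div_mul_eq_mul_div, mul_comm (x - d i) _, ← mul_assoc,
    mul_div_cancel_right₀ _ (hxd i)]
end lemmas

section helpers
-- parity of sign of a product
lemma prod_sub_sign {N : ℕ} (f : Fin N → ℝ) (t : ℝ) (h : ∀ i, f i ≠ t) :
    ∃ z : ℝ, 0 < z ∧ ∏ i, (t - f i) =
      (-1) ^ #(univ.filter fun i => t < f i) * z := by
  refine ⟨(∏ i ∈ univ.filter (fun i => t < f i), (f i - t)) *
    ∏ i ∈ univ.filter (fun i => ¬ t < f i), (t - f i), ?_, ?_⟩
  · apply mul_pos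
    · exact Finset.prod_pos fun i hi => sub_pos.mpr (Finset.mem_filter.mp hi).2
    · apply Finset.prod_pos
      intro i hi
      have h1 := (Finset.mem_filter.mp hi).2
      have h2 : f i < t := lt_of_le_of_ne (not_lt.mp h1) (h i)
      linarith
  · rw [← Finset.prod_filter_mul_prod_filter_not univ (fun i => t < f i) (fun i => t - f i)]
    have h3 : ∏ i ∈ univ.filter (fun i => t < f i), (t - f i)
        = (-1 : ℝ) ^ #(univ.filter fun i => t < f i) *
          ∏ i ∈ univ.filter (fun i => t < f i), (f i - t) := by
      rw [← Finset.prod_const (-1 : ℝ), ← Finset.prod_mul_distrib]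
      exact Finset.prod_congr rfl fun i _ => by ring
    rw [h3, mul_assoc]

-- monotone counting
lemma monotone_count_le {N : ℕ} {f : Fin N → ℝ} (hf : Monotone f) (t : ℝ) (i : Fin N) :
    ((i : ℕ) < #(univ.filter fun j => f j ≤ t) → f i ≤ t) ∧
      (#(univ.filter fun j => f j ≤ t) ≤ (i : ℕ) → t < f i) := by
  constructor
  · intro hi
    by_contra hfi
    have hsub : (univ.filter fun j => f j ≤ t) ⊆ Finset.Iio i := by
      intro j hj
      rw [Finset.mem_Iio]
      by_contra hji
      exact hfi (le_trans (hf (not_lt.mp hji : i ≤ j)) (Finset.mem_filter.mp hj).2)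
    have hc := Finset.card_le_card hsub
    rw [Fin.card_Iio] at hc
    omega
  · intro hi
    by_contra hfi
    have hsub : Finset.Iic i ⊆ univ.filter fun j => f j ≤ t := by
      intro j hj
      exact Finset.mem_filter.mpr ⟨Finset.mem_univ _,
        le_trans (hf (Finset.mem_Iic.mp hj)) (not_lt.mp hfi)⟩
    have hc := Finset.card_le_card hsub
    rw [Fin.card_Iic] at hc
    omega

lemma card_filter_perm {N : ℕ} (σ : Equiv.Perm (Fin N)) (p : Fin N → Prop) [DecidablePred p] :
    #(univ.filter fun i => p (σ i)) = #(univ.filter p) := by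
  refine Finset.card_bij (fun i _ => σ i) ?_ ?_ ?_
  · intro i hi
    simp only [Finset.mem_filter, Finset.mem_univ, true_and] at hi ⊢
    exact hi
  · intro i _ j _ hij
    exact σ.injective hij
  · intro j hj
    simp only [Finset.mem_filter, Finset.mem_univ, true_and] at hj
    exact ⟨σ.symm j, Finset.mem_filter.mpr ⟨Finset.mem_univ _, by simpa using hj⟩, by simp⟩

-- frozen-roots: multiplicity of v among the μ's
lemma frozen_count {N : ℕ} (μ : Fin (N+1) → ℝ) (P : ℝ[X])
    (hP : P = ∏ i, (X - C (μ i))) (v : ℝ) (m : ℕ)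
    (hdvd : (X - C v) ^ m ∣ P) :
    m ≤ #(univ.filter fun i : Fin (N+1) => μ i = v) := by
  have hne : P ≠ 0 := by
    rw [hP]
    exact (monic_prod_of_monic _ _ fun i _ => monic_X_sub_C (μ i)).ne_zero
  have hm : m ≤ rootMultiplicity v P := (le_rootMultiplicity_iff hne).mpr hdvd
  have hroots : P.roots = Multiset.map μ Finset.univ.val := by
    rw [hP, show (∏ i, (X - C (μ i))) =
      ((Multiset.map μ Finset.univ.val).map fun r => X - C r).prod by
        rw [Multiset.map_map]; rfl]
    exact roots_multiset_prod_X_sub_C _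
  have hcount : rootMultiplicity v P = #(univ.filter fun i : Fin (N+1) => μ i = v) := by
    rw [← count_roots, hroots, Multiset.count_map]
    rw [show (Multiset.filter (fun a => v = μ a) univ.val) =
      (Multiset.filter (fun a => μ a = v) univ.val) from
      Multiset.filter_congr fun i _ => by constructor <;> (intro h; exact h.symm)]
    rfl
  omega
end helpers

lemma prod_neg' {ι : Type*} (s : Finset ι) (f : ι → ℝ) :
    ∏ i ∈ s, (-(f i)) = (-1) ^ #s * ∏ i ∈ s, f i := by
  rw [← Finset.prod_const (-1 : ℝ), ← Finset.prod_mul_distrib]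
  exact Finset.prod_congr rfl fun i _ => by ring

lemma zoneA (n : ℕ) (hn : 0 < n) (c d : Fin n → ℝ) (ε' lo : ℝ) (hε' : 0 < ε')
    (hlo : ∀ i, lo ≤ d i) :
    ∀ᶠ a in atTop, ∀ x, x ≤ lo - ε' →
      (x - a) * (∏ i, (x - d i)) -
        (∑ i, c i ^ 2 * ∏ j ∈ Finset.univ.erase i, (x - d j)) ≠ 0 := by
  obtain ⟨C, hC⟩ : ∃ C : ℝ, C = ∑ i, c i ^ 2 := ⟨_, rfl⟩
  have hC0 : 0 ≤ C := hC ▸ Finset.sum_nonneg fun i _ => sq_nonneg _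
  have hCi : ∀ i, c i ^ 2 ≤ C := fun i =>
    hC ▸ Finset.single_le_sum (fun j _ => sq_nonneg (c j)) (Finset.mem_univ i)
  haveI : Nonempty (Fin n) := ⟨⟨0, hn⟩⟩
  filter_upwards [eventually_ge_atTop (lo + ((n:ℝ) * C + 1) / ε')] with a ha x hx
  set t : Fin n → ℝ := fun i => d i - x with ht
  have hte : ∀ i, ε' ≤ t i := fun i => by
    have := hlo i; simp only [ht]; linarith
  have htpos : ∀ i, 0 < t i := fun i => lt_of_lt_of_le hε' (hte i)
  have hTi_pos : ∀ i, 0 < ∏ j ∈ Finset.univ.erase i, t j := fun i =>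
    Finset.prod_pos fun j _ => htpos j
  have hax : ((n:ℝ) * C + 1) / ε' ≤ a - x := by
    have hd0 : 0 ≤ ((n:ℝ)*C+1)/ε' := by positivity
    linarith
  -- rewrite products
  have hq : (∏ i, (x - d i)) = (-1) ^ n * ∏ i, t i := by
    rw [show (∏ i, (x - d i)) = ∏ i, (-(t i)) from
      Finset.prod_congr rfl fun i _ => by simp only [ht]; ring, prod_neg' _ _]
    simp
  have hr : ∀ i, (∏ j ∈ Finset.univ.erase i, (x - d j)) =
      (-1) ^ (n - 1) * ∏ j ∈ Finset.univ.erase i, t j := by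
    intro i
    rw [show (∏ j ∈ Finset.univ.erase i, (x - d j)) = ∏ j ∈ Finset.univ.erase i, (-(t j)) from
      Finset.prod_congr rfl fun j _ => by simp only [ht]; ring, prod_neg' _ _,
      Finset.card_erase_of_mem (Finset.mem_univ i), Finset.card_univ, Fintype.card_fin]
  clear_value t
  have hsgn : (-1 : ℝ) ^ n = -(-1 : ℝ) ^ (n - 1) := by
    conv_lhs => rw [show n = (n - 1) + 1 by omega]
    rw [pow_succ]; ring
  -- main inequality
  have hmain : ∑ i, c i ^ 2 * ∏ j ∈ Finset.univ.erase i, t j < (a - x) * ∏ i, t i := by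
    have hpt : ∀ i, (n : ℝ) * (c i ^ 2 * ∏ j ∈ Finset.univ.erase i, t j) <
        (a - x) * (t i * ∏ j ∈ Finset.univ.erase i, t j) := by
      intro i
      have h1 : (n : ℝ) * c i ^ 2 < (a - x) * t i := by
        have hd0 : 0 ≤ ((n:ℝ)*C+1)/ε' := by positivity
        have h3 : ((n:ℝ) * C + 1) / ε' * ε' ≤ (a - x) * t i :=
          mul_le_mul hax (hte i) hε'.le (by linarith)
        have h4 : ((n:ℝ) * C + 1) / ε' * ε' = (n:ℝ) * C + 1 :=
          div_mul_cancel₀ _ (ne_of_gt hε')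
        have h2 : (n : ℝ) * C < (a - x) * t i := by linarith
        have hn0 : (0:ℝ) ≤ n := Nat.cast_nonneg n
        exact lt_of_le_of_lt (mul_le_mul_of_nonneg_left (hCi i) hn0) h2
      calc (n : ℝ) * (c i ^ 2 * ∏ j ∈ Finset.univ.erase i, t j)
          = ((n : ℝ) * c i ^ 2) * ∏ j ∈ Finset.univ.erase i, t j := by ring
        _ < ((a - x) * t i) * ∏ j ∈ Finset.univ.erase i, t j := by
            exact mul_lt_mul_of_pos_right h1 (hTi_pos i)
        _ = (a - x) * (t i * ∏ j ∈ Finset.univ.erase i, t j) := by ring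
    have hsum := Finset.sum_lt_sum_of_nonempty
      (Finset.univ_nonempty (α := Fin n)) fun i _ => hpt i
    have hleft : ∑ i, (n : ℝ) * (c i ^ 2 * ∏ j ∈ Finset.univ.erase i, t j) =
        n * ∑ i, c i ^ 2 * ∏ j ∈ Finset.univ.erase i, t j := by
      rw [Finset.mul_sum]
    have hright : ∑ i : Fin n, (a - x) * (t i * ∏ j ∈ Finset.univ.erase i, t j) =
        n * ((a - x) * ∏ i, t i) := by
      rw [Finset.sum_congr rfl fun i _ => by
        rw [Finset.mul_prod_erase Finset.univ t (Finset.mem_univ i)]]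
      rw [Finset.sum_const, Finset.card_univ, Fintype.card_fin, nsmul_eq_mul]
    rw [hleft, hright] at hsum
    have hn' : (0:ℝ) < n := by exact_mod_cast hn
    exact lt_of_mul_lt_mul_left hsum (le_of_lt hn')
  -- conclude
  rw [hq]
  rw [Finset.sum_congr rfl fun i _ => by rw [hr i]]
  have hsum2 : ∑ i, c i ^ 2 * ((-1:ℝ)^(n-1) * ∏ j ∈ Finset.univ.erase i, t j)
      = (-1:ℝ)^(n-1) * ∑ i, c i ^ 2 * ∏ j ∈ Finset.univ.erase i, t j := by
    rw [Finset.mul_sum]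
    exact Finset.sum_congr rfl fun i _ => by ring
  have hexpand : (x - a) * ((-1 : ℝ) ^ n * ∏ i, t i) -
      ∑ i, c i ^ 2 * ((-1 : ℝ) ^ (n-1) * ∏ j ∈ Finset.univ.erase i, t j) =
      (-1 : ℝ) ^ (n - 1) * ((a - x) * ∏ i, t i -
        ∑ i, c i ^ 2 * ∏ j ∈ Finset.univ.erase i, t j) := by
    rw [hsum2, hsgn]; ring
  rw [hexpand]
  apply mul_ne_zero
  · exact pow_ne_zero _ (by norm_num)
  · linarith
lemma zoneB (n : ℕ) (c d : Fin n → ℝ) (ε' lo hi : ℝ) (hε' : 0 < ε') (hε'1 : ε' ≤ 1)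
    (hlohi : lo ≤ hi) (hd : ∀ i, lo ≤ d i ∧ d i ≤ hi) :
    ∀ᶠ a in atTop, ∀ x, lo - ε' ≤ x → x ≤ hi + 2 →
      (∀ i, ε' ≤ |x - d i|) →
      ((x - a) * (∏ i, (x - d i)) -
        (∑ i, c i ^ 2 * ∏ j ∈ Finset.univ.erase i, (x - d j))) * (∏ i, (x - d i)) < 0 := by
  obtain ⟨C, hC⟩ : ∃ C : ℝ, C = ∑ i, c i ^ 2 := ⟨_, rfl⟩
  have hC0 : 0 ≤ C := hC ▸ Finset.sum_nonneg fun i _ => sq_nonneg _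
  obtain ⟨W, hW⟩ : ∃ W : ℝ, W = hi - lo + 3 := ⟨_, rfl⟩
  have hW1 : 1 ≤ W := by rw [hW]; linarith
  have hW0 : 0 ≤ W := by linarith
  obtain ⟨K, hK⟩ : ∃ K : ℝ, K = C * (W ^ n * W ^ n) := ⟨_, rfl⟩
  have hK0 : 0 ≤ K := by rw [hK]; positivity
  have he2n : (0:ℝ) < ε' ^ (2 * n) := by positivity
  filter_upwards [eventually_ge_atTop (hi + 2 + (K + 1) / ε' ^ (2 * n))] with a ha
  intro x hx1 hx2 hxd
  have habs : ∀ i, |x - d i| ≤ W := by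
    intro i
    rw [abs_le]
    refine ⟨by have := (hd i).2; rw [hW]; linarith, by have := (hd i).1; rw [hW]; linarith⟩
  have hqabs : |∏ i, (x - d i)| ≤ W ^ n := by
    rw [Finset.abs_prod]
    calc ∏ i, |x - d i| ≤ ∏ _i : Fin n, W :=
          Finset.prod_le_prod (fun i _ => abs_nonneg _) (fun i _ => habs i)
      _ = W ^ n := by rw [Finset.prod_const, Finset.card_univ, Fintype.card_fin]
  have hrabs : |∑ i, c i ^ 2 * ∏ j ∈ Finset.univ.erase i, (x - d j)| ≤ C * W ^ n := by
    calc |∑ i, c i ^ 2 * ∏ j ∈ Finset.univ.erase i, (x - d j)|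
        ≤ ∑ i, |c i ^ 2 * ∏ j ∈ Finset.univ.erase i, (x - d j)| :=
          Finset.abs_sum_le_sum_abs _ _
      _ ≤ ∑ i, c i ^ 2 * W ^ n := by
          apply Finset.sum_le_sum
          intro i _
          rw [abs_mul, abs_of_nonneg (sq_nonneg (c i))]
          apply mul_le_mul_of_nonneg_left _ (sq_nonneg (c i))
          calc |∏ j ∈ Finset.univ.erase i, (x - d j)|
              = ∏ j ∈ Finset.univ.erase i, |x - d j| := Finset.abs_prod _ _
            _ ≤ ∏ _j ∈ Finset.univ.erase i, W :=
                Finset.prod_le_prod (fun j _ => abs_nonneg _) (fun j _ => habs j)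
            _ = W ^ #(Finset.univ.erase i) := Finset.prod_const W
            _ ≤ W ^ n := by
                apply pow_le_pow_right₀ hW1
                calc #(Finset.univ.erase i) ≤ #(Finset.univ : Finset (Fin n)) :=
                      Finset.card_le_card (Finset.erase_subset _ _)
                  _ = n := by rw [Finset.card_univ, Fintype.card_fin]
      _ = C * W ^ n := by rw [← Finset.sum_mul, ← hC]
  have hq2 : ε' ^ (2 * n) ≤ (∏ i, (x - d i)) ^ 2 := by
    rw [pow_mul, ← Finset.prod_pow]
    calc (ε' ^ 2) ^ n = ∏ _i : Fin n, ε' ^ 2 := by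
          rw [Finset.prod_const, Finset.card_univ, Fintype.card_fin]
      _ ≤ ∏ i, (x - d i) ^ 2 := by
          apply Finset.prod_le_prod (fun i _ => by positivity)
          intro i _
          have h1 : ε' ^ 2 ≤ |x - d i| ^ 2 := pow_le_pow_left₀ hε'.le (hxd i) 2
          rwa [sq_abs] at h1
  obtain ⟨Q, hQ⟩ : ∃ Q : ℝ, Q = ∏ i, (x - d i) := ⟨_, rfl⟩
  obtain ⟨R, hR⟩ : ∃ R : ℝ, R = ∑ i, c i ^ 2 * ∏ j ∈ Finset.univ.erase i, (x - d j) := ⟨_, rfl⟩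
  rw [← hQ] at hqabs hq2 ⊢
  rw [← hR] at hrabs ⊢
  have hxa : x - a ≤ -((K + 1) / ε' ^ (2 * n)) := by linarith
  have hdivpos : 0 ≤ (K + 1) / ε' ^ (2 * n) := by positivity
  have h1 : (x - a) * Q ^ 2 ≤ (x - a) * ε' ^ (2 * n) :=
    mul_le_mul_of_nonpos_left hq2 (by linarith)
  have h2 : (x - a) * ε' ^ (2 * n) ≤ -((K + 1) / ε' ^ (2 * n)) * ε' ^ (2 * n) :=
    mul_le_mul_of_nonneg_right hxa he2n.le
  have h3 : -((K + 1) / ε' ^ (2 * n)) * ε' ^ (2 * n) = -(K + 1) := by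
    field_simp
  have h4 : |R * Q| ≤ K := by
    rw [abs_mul, hK]
    calc |R| * |Q| ≤ (C * W ^ n) * W ^ n :=
          mul_le_mul hrabs hqabs (abs_nonneg _) (by positivity)
      _ = C * (W ^ n * W ^ n) := by ring
  have h5 : -K ≤ R * Q := by
    have := neg_abs_le (R * Q)
    linarith
  have hexp : ((x - a) * Q - R) * Q = (x - a) * Q ^ 2 - R * Q := by ring
  rw [hexp]
  linarith

lemma zoneC (n : ℕ) (hn : 0 < n) (c d : Fin n → ℝ) (ε ε' lo hi : ℝ) (hε : 0 < ε)
    (hε' : 0 < ε') (hlohi : lo ≤ hi) (hd : ∀ i, lo ≤ d i ∧ d i ≤ hi) :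
    ∀ᶠ a in atTop, ∀ x, hi + ε' ≤ x →
      (x - a) * (∏ i, (x - d i)) -
        (∑ i, c i ^ 2 * ∏ j ∈ Finset.univ.erase i, (x - d j)) = 0 →
      a ≤ x ∧ x - a < ε := by
  obtain ⟨C, hC⟩ : ∃ C : ℝ, C = ∑ i, c i ^ 2 := ⟨_, rfl⟩
  have hC0 : 0 ≤ C := hC ▸ Finset.sum_nonneg fun i _ => sq_nonneg _
  have hdivpos : 0 ≤ (C * 2 ^ n + 1) / ε := by positivity
  filter_upwards [eventually_ge_atTop (hi + (hi - lo) + (C * 2 ^ n + 1) / ε + 1)] with a ha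
  intro x hx heq
  have hxhi : hi + ε' ≤ x := hx
  have hxd : ∀ i, 0 < x - d i := fun i => by have := (hd i).2; linarith
  have hQpos : 0 < ∏ i, (x - d i) := Finset.prod_pos fun i _ => hxd i
  have hR0 : 0 ≤ ∑ i, c i ^ 2 * ∏ j ∈ Finset.univ.erase i, (x - d j) :=
    Finset.sum_nonneg fun i _ => mul_nonneg (sq_nonneg _)
      (le_of_lt (Finset.prod_pos fun j _ => hxd j))
  have hax : a ≤ x := by
    by_contra hcon
    push_neg at hcon
    have h1 : (x - a) * ∏ i, (x - d i) < 0 :=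
      mul_neg_of_neg_of_pos (by linarith) hQpos
    linarith [heq]
  refine ⟨hax, ?_⟩
  -- bounds
  have hxlo : 0 < x - lo := by linarith
  have hxhi' : 0 ≤ x - hi := by linarith
  have hRle : ∑ i, c i ^ 2 * ∏ j ∈ Finset.univ.erase i, (x - d j)
      ≤ C * (2 ^ n * (x - hi) ^ (n - 1)) := by
    have hperase : ∀ i : Fin n, ∏ j ∈ Finset.univ.erase i, (x - d j) ≤ (x - lo) ^ (n - 1) := by
      intro i
      calc ∏ j ∈ Finset.univ.erase i, (x - d j) ≤ ∏ _j ∈ Finset.univ.erase i, (x - lo) :=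
            Finset.prod_le_prod (fun j _ => (hxd j).le)
              (fun j _ => by have := (hd j).1; linarith)
        _ = (x - lo) ^ (n - 1) := by
            rw [Finset.prod_const, Finset.card_erase_of_mem (Finset.mem_univ i),
              Finset.card_univ, Fintype.card_fin]
    have hlo2hi : x - lo ≤ 2 * (x - hi) := by linarith
    have hpow : (x - lo) ^ (n - 1) ≤ 2 ^ n * (x - hi) ^ (n - 1) := by
      calc (x - lo) ^ (n - 1) ≤ (2 * (x - hi)) ^ (n - 1) :=
            pow_le_pow_left₀ hxlo.le hlo2hi (n - 1)
        _ = 2 ^ (n - 1) * (x - hi) ^ (n - 1) := mul_pow 2 (x - hi) (n - 1)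
        _ ≤ 2 ^ n * (x - hi) ^ (n - 1) := by
            apply mul_le_mul_of_nonneg_right _ (by positivity)
            exact pow_le_pow_right₀ (by norm_num) (Nat.sub_le n 1)
    calc ∑ i, c i ^ 2 * ∏ j ∈ Finset.univ.erase i, (x - d j)
        ≤ ∑ i, c i ^ 2 * (2 ^ n * (x - hi) ^ (n - 1)) := by
          apply Finset.sum_le_sum
          intro i _
          exact mul_le_mul_of_nonneg_left ((hperase i).trans hpow) (sq_nonneg _)
      _ = C * (2 ^ n * (x - hi) ^ (n - 1)) := by rw [← Finset.sum_mul, ← hC]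
  have hQge : (x - hi) ^ (n - 1) * (x - hi) ≤ ∏ i, (x - d i) := by
    have h1 : (x - hi) ^ (n - 1) * (x - hi) = (x - hi) ^ n := by
      rw [← pow_succ, Nat.sub_add_cancel hn]
    rw [h1]
    calc (x - hi) ^ n = ∏ _i : Fin n, (x - hi) := by
          rw [Finset.prod_const, Finset.card_univ, Fintype.card_fin]
      _ ≤ ∏ i, (x - d i) :=
          Finset.prod_le_prod (fun i _ => hxhi') (fun i _ => by have := (hd i).2; linarith)
  -- (x - a) * Q = R
  have hmain : (x - a) * ((x - hi) ^ (n - 1) * (x - hi)) ≤ C * (2 ^ n * (x - hi) ^ (n - 1)) := by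
    calc (x - a) * ((x - hi) ^ (n - 1) * (x - hi))
        ≤ (x - a) * ∏ i, (x - d i) := mul_le_mul_of_nonneg_left hQge (by linarith)
      _ = ∑ i, c i ^ 2 * ∏ j ∈ Finset.univ.erase i, (x - d j) := by linarith [heq]
      _ ≤ C * (2 ^ n * (x - hi) ^ (n - 1)) := hRle
  have hkey : (x - a) * (x - hi) ≤ C * 2 ^ n := by
    have hp : (0:ℝ) < (x - hi) ^ (n - 1) := by
      apply pow_pos
      linarith
    have h2 : ((x - a) * (x - hi)) * (x - hi) ^ (n - 1) ≤ (C * 2 ^ n) * (x - hi) ^ (n - 1) := by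
      calc ((x - a) * (x - hi)) * (x - hi) ^ (n - 1)
          = (x - a) * ((x - hi) ^ (n - 1) * (x - hi)) := by ring
        _ ≤ C * (2 ^ n * (x - hi) ^ (n - 1)) := hmain
        _ = (C * 2 ^ n) * (x - hi) ^ (n - 1) := by ring
    exact le_of_mul_le_mul_right h2 hp
  by_contra hcon
  push_neg at hcon
  have h6 : ε * ((C * 2 ^ n + 1) / ε) = C * 2 ^ n + 1 := by field_simp
  have h7 : (C * 2 ^ n + 1) / ε ≤ x - hi := by linarith
  have h8 : ε * ((C * 2 ^ n + 1) / ε) ≤ (x - a) * (x - hi) := by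
    apply mul_le_mul hcon h7 hdivpos (by linarith)
  linarith

lemma dist_test {v x dj ε' : ℝ} (hε' : 0 < ε') (hx : x = v - ε' ∨ x = v + ε')
    (h : dj = v ∨ 3 * ε' ≤ |v - dj|) : ε' ≤ |x - dj| := by
  rcases h with h | h
  · rcases hx with rfl | rfl
    · exact le_abs.mpr (Or.inr (by rw [h]; linarith))
    · exact le_abs.mpr (Or.inl (by rw [h]; linarith))
  · rcases le_abs.mp h with h2 | h2 <;> rcases hx with rfl | rfl
    · exact le_abs.mpr (Or.inl (by linarith))
    · exact le_abs.mpr (Or.inl (by linarith))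
    · exact le_abs.mpr (Or.inr (by linarith))
    · exact le_abs.mpr (Or.inr (by linarith))

/-- Asymptotics of the ordered eigenvalues of the arrowhead matrix as
`a → +∞`: if `μ_1(a) ≤ ⋯ ≤ μ_{n+1}(a)` are the eigenvalues of `B(a,c,d)`
listed with multiplicity (i.e. the characteristic polynomial factors as
`∏ (X − μ_i(a))`), and `ds` is `d` arranged in increasing order, then
`μ_i(a) → d_(i)` for `1 ≤ i ≤ n` and `μ_{n+1}(a) − a → 0`. -/
theorem arrowhead_eigenvalues_asymptotics (n : ℕ) (hn : 1 ≤ n) (c d : Fin n → ℝ)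
    (ds : Fin n → ℝ) (hds_mono : Monotone ds)
    (hds_perm : ∃ σ : Equiv.Perm (Fin n), ds = d ∘ σ)
    (μ : ℝ → Fin (n + 1) → ℝ) (hμ_mono : ∀ a, Monotone (μ a))
    (hμ_eig : ∀ a, (arrowhead n a c d).charpoly =
      ∏ i, (Polynomial.X - Polynomial.C (μ a i))) :
    (∀ i : Fin n,
        Tendsto (fun a : ℝ => μ a i.castSucc) atTop (nhds (ds i))) ∧
      Tendsto (fun a : ℝ => μ a (Fin.last n) - a) atTop (nhds 0) := by
  obtain ⟨σ, rfl⟩ := hds_perm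
  haveI : Nonempty (Fin n) := ⟨⟨0, hn⟩⟩
  -- real-valued key identity
  have key : ∀ (a x : ℝ), (∏ i, (x - μ a i)) =
      (x - a) * (∏ i, (x - d i)) -
        (∑ i, c i ^ 2 * ∏ j ∈ Finset.univ.erase i, (x - d j)) := by
    intro a x
    have h1 := congrArg (eval x) ((hμ_eig a).symm.trans (arrowhead_charpoly n a c d))
    simpa [eval_prod, eval_finset_sum] using h1
  -- frozen eigenvalues
  have frozen : ∀ (a v : ℝ),
      #(Finset.univ.filter fun i : Fin n => d i = v) ≤
        #(Finset.univ.filter fun i : Fin (n+1) => μ a i = v) + 1 := by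
    intro a v
    set m := #(Finset.univ.filter fun i : Fin n => d i = v) with hm
    rcases Nat.eq_zero_or_pos m with h0 | hpos
    · omega
    have hdvd : (X - C v) ^ (m - 1) ∣ ∏ i, (X - C (μ a i)) := by
      rw [← hμ_eig a, arrowhead_charpoly n a c d]
      apply dvd_sub
      · apply Dvd.dvd.mul_left
        rw [← Finset.prod_filter_mul_prod_filter_not Finset.univ
          (fun i => d i = v) (fun i => X - C (d i))]
        apply Dvd.dvd.mul_right
        have heq : ∏ i ∈ Finset.univ.filter (fun i => d i = v), (X - C (d i)) =
            (X - C v) ^ m := by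
          rw [Finset.prod_congr rfl (fun i hi => by
            rw [(Finset.mem_filter.mp hi).2]), Finset.prod_const, hm]
        rw [heq]
        exact pow_dvd_pow _ (Nat.sub_le m 1)
      · apply Finset.dvd_sum
        intro i _
        apply Dvd.dvd.mul_left
        rw [← Finset.prod_filter_mul_prod_filter_not (Finset.univ.erase i)
          (fun j => d j = v) (fun j => X - C (d j))]
        apply Dvd.dvd.mul_right
        have heq : ∏ j ∈ (Finset.univ.erase i).filter (fun j => d j = v), (X - C (d j)) =
            (X - C v) ^ #((Finset.univ.erase i).filter (fun j => d j = v)) := by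
          rw [Finset.prod_congr rfl (fun j hj => by
            rw [(Finset.mem_filter.mp hj).2]), Finset.prod_const]
        rw [heq]
        apply pow_dvd_pow
        have hsub : Finset.univ.filter (fun j => d j = v) ⊆
            insert i ((Finset.univ.erase i).filter (fun j => d j = v)) := by
          intro j hj
          rcases eq_or_ne j i with h | h
          · exact h ▸ Finset.mem_insert_self _ _
          · exact Finset.mem_insert_of_mem (Finset.mem_filter.mpr
              ⟨Finset.mem_erase.mpr ⟨h, Finset.mem_univ j⟩, (Finset.mem_filter.mp hj).2⟩)
        have := (Finset.card_le_card hsub).trans (Finset.card_insert_le _ _)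
        omega
    have := frozen_count (μ a) _ rfl v (m - 1) hdvd
    omega
  -- main eventual statement
  have main : ∀ ε : ℝ, 0 < ε → ∀ᶠ a in atTop,
      (∀ j : Fin n, |μ a j.castSucc - (d ∘ σ) j| < ε) ∧ |μ a (Fin.last n) - a| < ε := by
    intro ε hε
    obtain ⟨lo, hlo⟩ : ∃ lo, lo = Finset.univ.inf' Finset.univ_nonempty d := ⟨_, rfl⟩
    obtain ⟨hi, hhi⟩ : ∃ hi, hi = Finset.univ.sup' Finset.univ_nonempty d := ⟨_, rfl⟩
    have hdlo : ∀ i, lo ≤ d i := fun i => hlo ▸ Finset.inf'_le d (Finset.mem_univ i)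
    have hdhi : ∀ i, d i ≤ hi := fun i => hhi ▸ Finset.le_sup' d (Finset.mem_univ i)
    have hlohi : lo ≤ hi := (hdlo ⟨0, hn⟩).trans (hdhi ⟨0, hn⟩)
    -- the separation constant
    obtain ⟨ε', hε'pos, hε'ε, hε'1, hgap⟩ : ∃ ε' : ℝ, 0 < ε' ∧ ε' ≤ ε ∧ ε' ≤ 1 ∧
        ∀ i j : Fin n, d i ≠ d j → 3 * ε' ≤ |d i - d j| := by
      by_cases hG : ∃ p : Fin n × Fin n, d p.1 ≠ d p.2
      · obtain ⟨G, hGdef⟩ : ∃ G : Finset ℝ,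
            G = (Finset.univ.filter (fun p : Fin n × Fin n => d p.1 ≠ d p.2)).image
              (fun p => |d p.1 - d p.2|) := ⟨_, rfl⟩
        obtain ⟨p0, hp0⟩ := hG
        have hGne : G.Nonempty := ⟨|d p0.1 - d p0.2|, by
          rw [hGdef]
          exact Finset.mem_image.mpr ⟨p0,
            Finset.mem_filter.mpr ⟨Finset.mem_univ _, hp0⟩, rfl⟩⟩
        have hgpos : 0 < G.min' hGne := by
          have hmm : G.min' hGne ∈ (Finset.univ.filter
              (fun p : Fin n × Fin n => d p.1 ≠ d p.2)).image
              (fun p => |d p.1 - d p.2|) := by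
            rw [← hGdef]; exact G.min'_mem hGne
          obtain ⟨p, hp, hpe⟩ := Finset.mem_image.mp hmm
          have h2 : d p.1 ≠ d p.2 := (Finset.mem_filter.mp hp).2
          rw [← hpe]
          exact abs_pos.mpr (sub_ne_zero.mpr h2)
        refine ⟨min (min ε 1) (G.min' hGne / 3), by positivity, ?_, ?_, ?_⟩
        · exact (min_le_left _ _).trans (min_le_left _ _)
        · exact (min_le_left _ _).trans (min_le_right _ _)
        · intro i j hij
          have hmem : |d i - d j| ∈ G := by
            rw [hGdef]
            exact Finset.mem_image.mpr ⟨(i, j),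
              Finset.mem_filter.mpr ⟨Finset.mem_univ _, hij⟩, rfl⟩
          have h1 := Finset.min'_le G _ hmem
          have h2 : min (min ε 1) (G.min' hGne / 3) ≤ G.min' hGne / 3 := min_le_right _ _
          linarith
      · push_neg at hG
        refine ⟨min ε 1, lt_min hε one_pos, min_le_left _ _, min_le_right _ _, ?_⟩
        intro i j hij
        exact absurd (hG (i, j)) hij
    -- eventual facts about a
    filter_upwards [zoneA n hn c d ε' lo hε'pos hdlo,
      zoneB n c d ε' lo hi hε'pos hε'1 hlohi (fun i => ⟨hdlo i, hdhi i⟩),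
      zoneC n hn c d ε ε' lo hi hε hε'pos hlohi (fun i => ⟨hdlo i, hdhi i⟩)] with a hA hB hCC
    -- all eigenvalues are above lo - ε'
    have hlow : ∀ i : Fin (n+1), lo - ε' < μ a i := by
      intro i
      by_contra hcon
      push_neg at hcon
      have h0 : (∏ k, (μ a i - μ a k)) = 0 :=
        Finset.prod_eq_zero (Finset.mem_univ i) (by simp)
      rw [key a (μ a i)] at h0
      exact hA (μ a i) hcon h0
    -- the parity fact at admissible test points
    have parity : ∀ t : ℝ, lo - ε' ≤ t → t ≤ hi + 2 → (∀ i, ε' ≤ |t - d i|) →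
        (∀ i, μ a i ≠ t) ∧
        (#(Finset.univ.filter fun i => μ a i ≤ t) +
          #(Finset.univ.filter fun i => d i ≤ t)) % 2 = 0 := by
      intro t ht1 ht2 ht3
      have hpq := hB t ht1 ht2 ht3
      rw [← key a t] at hpq
      have hμne : ∀ i, μ a i ≠ t := by
        intro i hcon
        have h0 : (∏ k, (t - μ a k)) = 0 :=
          Finset.prod_eq_zero (Finset.mem_univ i) (by rw [hcon]; ring)
        rw [h0, zero_mul] at hpq
        exact lt_irrefl 0 hpq
      have hdne : ∀ i, d i ≠ t := by
        intro i hcon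
        have h0 : (∏ k, (t - d k)) = 0 :=
          Finset.prod_eq_zero (Finset.mem_univ i) (by rw [hcon]; ring)
        rw [h0, mul_zero] at hpq
        exact lt_irrefl 0 hpq
      refine ⟨hμne, ?_⟩
      obtain ⟨z1, hz1, he1⟩ := prod_sub_sign (μ a) t hμne
      obtain ⟨z2, hz2, he2⟩ := prod_sub_sign d t hdne
      rw [he1, he2] at hpq
      have hform : ((-1 : ℝ) ^ #(Finset.univ.filter fun i => t < μ a i) * z1) *
          ((-1 : ℝ) ^ #(Finset.univ.filter fun i => t < d i) * z2) =
          (-1 : ℝ) ^ (#(Finset.univ.filter fun i => t < μ a i) +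
            #(Finset.univ.filter fun i => t < d i)) * (z1 * z2) := by
        rw [pow_add]; ring
      rw [hform] at hpq
      have hodd : ¬ Even (#(Finset.univ.filter fun i => t < μ a i) +
          #(Finset.univ.filter fun i => t < d i)) := by
        intro he
        rw [he.neg_one_pow, one_mul] at hpq
        nlinarith [mul_pos hz1 hz2]
      have hc1 := Finset.card_filter_add_card_filter_not
        (s := Finset.univ) (p := fun i : Fin (n+1) => μ a i ≤ t)
      have hc2 := Finset.card_filter_add_card_filter_not
        (s := Finset.univ) (p := fun i : Fin n => d i ≤ t)
      rw [Finset.card_univ, Fintype.card_fin] at hc1 hc2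
      have hceq1 : Finset.univ.filter (fun i : Fin (n+1) => ¬ μ a i ≤ t) =
          Finset.univ.filter (fun i => t < μ a i) :=
        Finset.filter_congr fun i _ => by simp [not_le]
      have hceq2 : Finset.univ.filter (fun i : Fin n => ¬ d i ≤ t) =
          Finset.univ.filter (fun i => t < d i) :=
        Finset.filter_congr fun i _ => by simp [not_le]
      rw [hceq1] at hc1
      rw [hceq2] at hc2
      rw [Nat.even_iff] at hodd
      omega
    -- distinct values of d
    obtain ⟨V, hV⟩ : ∃ V : Finset ℝ, V = Finset.univ.image d := ⟨_, rfl⟩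
    have hVlohi : ∀ v ∈ V, lo ≤ v ∧ v ≤ hi := by
      intro v hv
      have hv' : v ∈ Finset.univ.image d := by rw [← hV]; exact hv
      obtain ⟨i0, _, hi0⟩ := Finset.mem_image.mp hv'
      exact ⟨hi0 ▸ hdlo i0, hi0 ▸ hdhi i0⟩
    have hVgap : ∀ v ∈ V, ∀ w ∈ V, v ≠ w → 3 * ε' ≤ |v - w| := by
      intro v hv w hw hvw
      have hv' : v ∈ Finset.univ.image d := by rw [← hV]; exact hv
      have hw' : w ∈ Finset.univ.image d := by rw [← hV]; exact hw
      obtain ⟨iv, _, hiv⟩ := Finset.mem_image.mp hv'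
      obtain ⟨iw, _, hiw⟩ := Finset.mem_image.mp hw'
      have hg := hgap iv iw (by rw [hiv, hiw]; exact hvw)
      rw [hiv, hiw] at hg
      exact hg
    have hVd : ∀ v ∈ V, ∀ j, d j = v ∨ 3 * ε' ≤ |v - d j| := by
      intro v hv j
      rcases eq_or_ne (d j) v with h | h
      · exact Or.inl h
      · right
        have hdj : d j ∈ V := by rw [hV]; exact Finset.mem_image_of_mem d (Finset.mem_univ j)
        exact hVgap v hv (d j) hdj (Ne.symm h)
    have htadm : ∀ v ∈ V, ∀ x : ℝ, (x = v - ε' ∨ x = v + ε') →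
        (lo - ε' ≤ x ∧ x ≤ hi + 2 ∧ ∀ j, ε' ≤ |x - d j|) := by
      intro v hv x hx
      obtain ⟨h1, h2⟩ := hVlohi v hv
      refine ⟨?_, ?_, fun j => dist_test hε'pos hx (hVd v hv j)⟩
      · rcases hx with rfl | rfl <;> linarith
      · rcases hx with rfl | rfl <;> linarith
    have hIdμ : ∀ v ∈ V,
        #(Finset.univ.filter fun i : Fin (n+1) => μ a i ≤ v + ε') =
          #(Finset.univ.filter fun i : Fin (n+1) => μ a i ≤ v - ε') +
          #(Finset.univ.filter fun i : Fin (n+1) => |μ a i - v| < ε') := by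
      intro v hv
      obtain ⟨hne, _⟩ := parity (v + ε') (htadm v hv _ (Or.inr rfl)).1
        (htadm v hv _ (Or.inr rfl)).2.1 (htadm v hv _ (Or.inr rfl)).2.2
      have hSdiff : Finset.univ.filter (fun i : Fin (n+1) => |μ a i - v| < ε') =
          Finset.univ.filter (fun i => μ a i ≤ v + ε') \
            Finset.univ.filter (fun i => μ a i ≤ v - ε') := by
        ext i
        simp only [Finset.mem_filter, Finset.mem_sdiff, Finset.mem_univ, true_and]
        constructor
        · intro h
          have h2 := abs_lt.mp h
          exact ⟨by linarith [h2.2], by intro hcon; linarith [h2.1]⟩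
        · rintro ⟨h1, h2⟩
          push_neg at h2
          rw [abs_lt]
          exact ⟨by linarith, by have := lt_of_le_of_ne h1 (hne i); linarith⟩
      have hsub : Finset.univ.filter (fun i : Fin (n+1) => μ a i ≤ v - ε') ⊆
          Finset.univ.filter (fun i => μ a i ≤ v + ε') := by
        exact Finset.monotone_filter_right _ (fun i _ hi => by linarith)
      have h3 := Finset.card_sdiff_of_subset hsub
      have h4 := Finset.card_le_card hsub
      rw [hSdiff, h3]
      omega
    have hIdd : ∀ v ∈ V,
        (Finset.univ.filter fun i : Fin n => d i ≤ v + ε') =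
          (Finset.univ.filter fun i => d i ≤ v) ∧
        (Finset.univ.filter fun i : Fin n => d i ≤ v - ε') =
          (Finset.univ.filter fun i => d i < v) ∧
        #(Finset.univ.filter fun i : Fin n => d i ≤ v) =
          #(Finset.univ.filter fun i => d i < v) +
          #(Finset.univ.filter fun i => d i = v) := by
      intro v hv
      refine ⟨?_, ?_, ?_⟩
      · apply Finset.filter_congr
        intro j _
        constructor
        · intro h
          by_contra hcon
          push_neg at hcon
          rcases hVd v hv j with h2 | h2
          · rw [h2] at hcon; exact lt_irrefl v hcon
          · rcases le_abs.mp h2 with h3 | h3 <;> linarith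
        · intro h; linarith
      · apply Finset.filter_congr
        intro j _
        constructor
        · intro h; linarith
        · intro h
          rcases hVd v hv j with h2 | h2
          · exact absurd h2 (ne_of_lt h)
          · rcases le_abs.mp h2 with h3 | h3 <;> linarith
      · have hun : Finset.univ.filter (fun i : Fin n => d i ≤ v) =
            Finset.univ.filter (fun i => d i < v) ∪
              Finset.univ.filter (fun i => d i = v) := by
          rw [← Finset.filter_or]
          exact Finset.filter_congr fun i _ => le_iff_lt_or_eq
        rw [hun, Finset.card_union_of_disjoint]
        rw [Finset.disjoint_left]
        intro i h1 h2
        exact absurd (Finset.mem_filter.mp h2).2 (ne_of_lt (Finset.mem_filter.mp h1).2)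
    have hm_le : ∀ v ∈ V,
        #(Finset.univ.filter fun i : Fin n => d i = v) ≤
          #(Finset.univ.filter fun i : Fin (n+1) => |μ a i - v| < ε') := by
      intro v hv
      obtain ⟨hDdp, hDdm, hsplit⟩ := hIdd v hv
      have hparp := (parity (v + ε') (htadm v hv _ (Or.inr rfl)).1
        (htadm v hv _ (Or.inr rfl)).2.1 (htadm v hv _ (Or.inr rfl)).2.2).2
      have hparm := (parity (v - ε') (htadm v hv _ (Or.inl rfl)).1
        (htadm v hv _ (Or.inl rfl)).2.1 (htadm v hv _ (Or.inl rfl)).2.2).2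
      rw [hDdp] at hparp
      rw [hDdm] at hparm
      have hμid := hIdμ v hv
      have hfz := frozen a v
      have hsubfz : (Finset.univ.filter fun i : Fin (n+1) => μ a i = v) ⊆
          (Finset.univ.filter fun i => |μ a i - v| < ε') := by
        exact Finset.monotone_filter_right _ (fun i _ hi => by rw [hi]; simpa using hε'pos)
      have hfzc := Finset.card_le_card hsubfz
      omega
    -- the big root region
    have hiV : hi ∈ V := by
      obtain ⟨imax, _, himax⟩ := Finset.exists_mem_eq_sup' Finset.univ_nonempty d
      rw [hV, hhi, himax]
      exact Finset.mem_image_of_mem d (Finset.mem_univ imax)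
    have hparmax := parity (hi + ε') (htadm hi hiV _ (Or.inr rfl)).1
      (htadm hi hiV _ (Or.inr rfl)).2.1 (htadm hi hiV _ (Or.inr rfl)).2.2
    have hDdmax : (Finset.univ.filter fun i : Fin n => d i ≤ hi + ε') = Finset.univ := by
      apply Finset.filter_true_of_mem
      intro i _
      linarith [hdhi i]
    have hcmax := Finset.card_filter_add_card_filter_not
      (s := Finset.univ) (p := fun i : Fin (n+1) => μ a i ≤ hi + ε')
    rw [Finset.card_univ, Fintype.card_fin] at hcmax
    have hceqmax : Finset.univ.filter (fun i : Fin (n+1) => ¬ μ a i ≤ hi + ε') =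
        Finset.univ.filter (fun i => hi + ε' < μ a i) :=
      Finset.filter_congr fun i _ => by simp [not_le]
    rw [hceqmax] at hcmax
    have hbigodd : #(Finset.univ.filter fun i : Fin (n+1) => hi + ε' < μ a i) % 2 = 1 := by
      have h2 := hparmax.2
      rw [hDdmax, Finset.card_univ, Fintype.card_fin] at h2
      omega
    have hpair : ∀ v ∈ V, ∀ w ∈ V, v ≠ w →
        Disjoint (Finset.univ.filter fun i : Fin (n+1) => |μ a i - v| < ε')
          (Finset.univ.filter fun i : Fin (n+1) => |μ a i - w| < ε') := by
      intro v hv w hw hvw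
      rw [Finset.disjoint_left]
      intro i hiv hiw
      have h1 := abs_lt.mp (Finset.mem_filter.mp hiv).2
      have h2 := abs_lt.mp (Finset.mem_filter.mp hiw).2
      have h3 := hVgap v hv w hw hvw
      rcases le_abs.mp h3 with h4 | h4 <;> linarith
    have hdisU : Disjoint
        (V.biUnion (fun v => Finset.univ.filter fun i : Fin (n+1) => |μ a i - v| < ε'))
        (Finset.univ.filter fun i : Fin (n+1) => hi + ε' < μ a i) := by
      rw [Finset.disjoint_left]
      intro i hmem hbig
      obtain ⟨v, hv, hiv⟩ := Finset.mem_biUnion.mp hmem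
      have h1 := abs_lt.mp (Finset.mem_filter.mp hiv).2
      have h2 := (Finset.mem_filter.mp hbig).2
      have h3 := (hVlohi v hv).2
      linarith
    have hcardsum : ∑ v ∈ V, #(Finset.univ.filter fun i : Fin (n+1) => |μ a i - v| < ε') +
        #(Finset.univ.filter fun i : Fin (n+1) => hi + ε' < μ a i) ≤ n + 1 := by
      rw [← Finset.card_biUnion hpair, ← Finset.card_union_of_disjoint hdisU]
      calc #(_ ∪ _) ≤ #(Finset.univ : Finset (Fin (n+1))) :=
            Finset.card_le_card (Finset.subset_univ _)
        _ = n + 1 := by rw [Finset.card_univ, Fintype.card_fin]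
    have hmsum : ∑ v ∈ V, #(Finset.univ.filter fun i : Fin n => d i = v) = n := by
      have h1 := Finset.card_eq_sum_card_fiberwise
        (f := d) (s := Finset.univ) (t := V)
        (fun i _ => by rw [hV]; exact Finset.mem_image_of_mem d (Finset.mem_univ i))
      rw [Finset.card_univ, Fintype.card_fin] at h1
      exact h1.symm
    have hcl_eq : ∀ v ∈ V,
        #(Finset.univ.filter fun i : Fin (n+1) => |μ a i - v| < ε') =
          #(Finset.univ.filter fun i : Fin n => d i = v) := by
      intro v hv
      by_contra hne
      have hlt : #(Finset.univ.filter fun i : Fin n => d i = v) <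
          #(Finset.univ.filter fun i : Fin (n+1) => |μ a i - v| < ε') :=
        lt_of_le_of_ne (hm_le v hv) (fun h => hne h.symm)
      have hstrict := Finset.sum_lt_sum (fun w hw => hm_le w hw) ⟨v, hv, hlt⟩
      omega
    have hbig1 : #(Finset.univ.filter fun i : Fin (n+1) => hi + ε' < μ a i) = 1 := by
      have hclsum : ∑ v ∈ V,
          #(Finset.univ.filter fun i : Fin (n+1) => |μ a i - v| < ε') = n := by
        rw [Finset.sum_congr rfl hcl_eq]
        exact hmsum
      omega
    have hPplus : ∀ v ∈ V,
        #(Finset.univ.filter fun i : Fin (n+1) => μ a i ≤ v + ε') =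
          #(Finset.univ.filter fun i : Fin n => d i ≤ v) := by
      intro v hv
      have hsub1 : (V.filter (fun w => w ≤ v)).biUnion
          (fun w => Finset.univ.filter fun i : Fin (n+1) => |μ a i - w| < ε') ⊆
          Finset.univ.filter (fun i => μ a i ≤ v + ε') := by
        intro i hi
        obtain ⟨w, hw, hiw⟩ := Finset.mem_biUnion.mp hi
        have hwv := (Finset.mem_filter.mp hw).2
        have h1 := abs_lt.mp (Finset.mem_filter.mp hiw).2
        exact Finset.mem_filter.mpr ⟨Finset.mem_univ _, by linarith⟩
      have hfib_le : #(Finset.univ.filter fun i : Fin n => d i ≤ v) =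
          ∑ w ∈ V.filter (fun w => w ≤ v),
            #(Finset.univ.filter fun i : Fin n => d i = w) := by
        have h1 := Finset.card_eq_sum_card_fiberwise
          (f := d) (s := Finset.univ.filter fun i : Fin n => d i ≤ v)
          (t := V.filter (fun w => w ≤ v))
          (fun i hi => Finset.mem_filter.mpr
            ⟨by rw [hV]; exact Finset.mem_image_of_mem d (Finset.mem_univ i),
             (Finset.mem_filter.mp hi).2⟩)
        rw [h1]
        apply Finset.sum_congr rfl
        intro w hw
        congr 1
        ext i
        simp only [Finset.mem_filter, Finset.mem_univ, true_and]
        constructor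
        · exact fun h => h.2
        · intro h
          exact ⟨by rw [h]; exact (Finset.mem_filter.mp hw).2, h⟩
      have hlow1 : #(Finset.univ.filter fun i : Fin n => d i ≤ v) ≤
          #(Finset.univ.filter fun i : Fin (n+1) => μ a i ≤ v + ε') := by
        rw [hfib_le]
        calc ∑ w ∈ V.filter (fun w => w ≤ v),
              #(Finset.univ.filter fun i : Fin n => d i = w)
            = ∑ w ∈ V.filter (fun w => w ≤ v),
                #(Finset.univ.filter fun i : Fin (n+1) => |μ a i - w| < ε') := by
              apply Finset.sum_congr rfl
              intro w hw
              exact (hcl_eq w (Finset.mem_of_mem_filter _ hw)).symm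
          _ = #((V.filter (fun w => w ≤ v)).biUnion
                (fun w => Finset.univ.filter fun i : Fin (n+1) => |μ a i - w| < ε')) := by
              rw [Finset.card_biUnion]
              intro x hx y hy hxy
              exact hpair x (Finset.mem_of_mem_filter _ hx) y (Finset.mem_of_mem_filter _ hy) hxy
          _ ≤ _ := Finset.card_le_card hsub1
      have hsub2 : ((V.filter (fun w => ¬ w ≤ v)).biUnion
          (fun w => Finset.univ.filter fun i : Fin (n+1) => |μ a i - w| < ε')) ∪
          (Finset.univ.filter fun i : Fin (n+1) => hi + ε' < μ a i) ⊆
          Finset.univ.filter (fun i : Fin (n+1) => ¬ (μ a i ≤ v + ε')) := by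
        intro i hi
        rcases Finset.mem_union.mp hi with hi | hi
        · obtain ⟨w, hw, hiw⟩ := Finset.mem_biUnion.mp hi
          have hwv : v < w := lt_of_not_ge (Finset.mem_filter.mp hw).2
          have h1 := abs_lt.mp (Finset.mem_filter.mp hiw).2
          have h3 := hVgap w (Finset.mem_of_mem_filter _ hw) v hv (ne_of_gt hwv)
          have h4 : v + 3 * ε' ≤ w := by
            rcases le_abs.mp h3 with h5 | h5 <;> linarith
          exact Finset.mem_filter.mpr ⟨Finset.mem_univ _, not_le.mpr (by linarith)⟩
        · have h2 := (Finset.mem_filter.mp hi).2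
          have h3 := (hVlohi v hv).2
          exact Finset.mem_filter.mpr ⟨Finset.mem_univ _, not_le.mpr (by linarith)⟩
      have hfib_gt : #(Finset.univ.filter fun i : Fin n => ¬ d i ≤ v) =
          ∑ w ∈ V.filter (fun w => ¬ w ≤ v),
            #(Finset.univ.filter fun i : Fin n => d i = w) := by
        have h1 := Finset.card_eq_sum_card_fiberwise
          (f := d) (s := Finset.univ.filter fun i : Fin n => ¬ d i ≤ v)
          (t := V.filter (fun w => ¬ w ≤ v))
          (fun i hi => Finset.mem_filter.mpr
            ⟨by rw [hV]; exact Finset.mem_image_of_mem d (Finset.mem_univ i),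
             (Finset.mem_filter.mp hi).2⟩)
        rw [h1]
        apply Finset.sum_congr rfl
        intro w hw
        congr 1
        ext i
        simp only [Finset.mem_filter, Finset.mem_univ, true_and]
        constructor
        · exact fun h => h.2
        · intro h
          exact ⟨by rw [h]; exact (Finset.mem_filter.mp hw).2, h⟩
      have hdisU2 : Disjoint ((V.filter (fun w => ¬ w ≤ v)).biUnion
          (fun w => Finset.univ.filter fun i : Fin (n+1) => |μ a i - w| < ε'))
          (Finset.univ.filter fun i : Fin (n+1) => hi + ε' < μ a i) := by
        apply Finset.disjoint_of_subset_left _ hdisU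
        exact Finset.biUnion_subset_biUnion_of_subset_left _ (Finset.filter_subset _ _)
      have hup1 : #(Finset.univ.filter fun i : Fin n => ¬ d i ≤ v) + 1 ≤
          #(Finset.univ.filter fun i : Fin (n+1) => ¬ (μ a i ≤ v + ε')) := by
        have hcard2 := Finset.card_le_card hsub2
        rw [Finset.card_union_of_disjoint hdisU2, Finset.card_biUnion (fun x hx y hy hxy =>
          hpair x (Finset.mem_of_mem_filter _ hx) y (Finset.mem_of_mem_filter _ hy) hxy)] at hcard2
        rw [hfib_gt]
        have heq2 : ∑ w ∈ V.filter (fun w => ¬ w ≤ v),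
              #(Finset.univ.filter fun i : Fin n => d i = w)
            = ∑ w ∈ V.filter (fun w => ¬ w ≤ v),
              #(Finset.univ.filter fun i : Fin (n+1) => |μ a i - w| < ε') := by
          apply Finset.sum_congr rfl
          intro w hw
          exact (hcl_eq w (Finset.mem_of_mem_filter _ hw)).symm
        rw [heq2]
        omega
      have hc1 := Finset.card_filter_add_card_filter_not
        (s := Finset.univ) (p := fun i : Fin (n+1) => μ a i ≤ v + ε')
      have hc2 := Finset.card_filter_add_card_filter_not
        (s := Finset.univ) (p := fun i : Fin n => d i ≤ v)
      rw [Finset.card_univ, Fintype.card_fin] at hc1 hc2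
      omega
    have hPminus : ∀ v ∈ V,
        #(Finset.univ.filter fun i : Fin (n+1) => μ a i ≤ v - ε') =
          #(Finset.univ.filter fun i : Fin n => d i < v) := by
      intro v hv
      have h1 := hIdμ v hv
      have h2 := (hIdd v hv).2.2
      have h3 := hcl_eq v hv
      have h4 := hPplus v hv
      omega
    constructor
    · intro j
      have hvV : d (σ j) ∈ V := by
        rw [hV]; exact Finset.mem_image_of_mem d (Finset.mem_univ (σ j))
      have hperm : #(Finset.univ.filter fun i : Fin n => d i ≤ d (σ j)) =
          #(Finset.univ.filter fun i : Fin n => d (σ i) ≤ d (σ j)) :=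
        (card_filter_perm σ _).symm
      have hSj : (j : ℕ) < #(Finset.univ.filter fun i : Fin n => d i ≤ d (σ j)) := by
        have hIic : Finset.Iic j ⊆
            Finset.univ.filter (fun i : Fin n => d (σ i) ≤ d (σ j)) := by
          intro i hi
          exact Finset.mem_filter.mpr ⟨Finset.mem_univ _, hds_mono (Finset.mem_Iic.mp hi)⟩
        have hcc := Finset.card_le_card hIic
        rw [Fin.card_Iic] at hcc
        omega
      have hSj' : #(Finset.univ.filter fun i : Fin n => d i < d (σ j)) ≤ (j : ℕ) := by
        have hperm' : #(Finset.univ.filter fun i : Fin n => d i < d (σ j)) =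
            #(Finset.univ.filter fun i : Fin n => d (σ i) < d (σ j)) :=
          (card_filter_perm σ _).symm
        have hIio : Finset.univ.filter (fun i : Fin n => d (σ i) < d (σ j)) ⊆
            Finset.Iio j := by
          intro i hi
          rw [Finset.mem_Iio]
          by_contra hcon
          push_neg at hcon
          exact absurd (hds_mono hcon) (not_le.mpr (Finset.mem_filter.mp hi).2)
        have hcc := Finset.card_le_card hIio
        rw [Fin.card_Iio] at hcc
        omega
      have hup := (monotone_count_le (hμ_mono a) (d (σ j) + ε') j.castSucc).1
      have hdown := (monotone_count_le (hμ_mono a) (d (σ j) - ε') j.castSucc).2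
      have hμle : μ a j.castSucc ≤ d (σ j) + ε' := by
        apply hup
        rw [hPplus _ hvV, Fin.coe_castSucc]
        omega
      have hμgt : d (σ j) - ε' < μ a j.castSucc := by
        apply hdown
        rw [hPminus _ hvV, Fin.coe_castSucc]
        omega
      have hμne := ((parity (d (σ j) + ε') (htadm _ hvV _ (Or.inr rfl)).1
        (htadm _ hvV _ (Or.inr rfl)).2.1 (htadm _ hvV _ (Or.inr rfl)).2.2).1) j.castSucc
      have habs : |μ a j.castSucc - (d ∘ σ) j| < ε' := by
        rw [abs_lt]
        constructor
        · simp only [Function.comp_apply]; linarith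
        · have h5 := lt_of_le_of_ne hμle hμne
          simp only [Function.comp_apply]; linarith
      exact lt_of_lt_of_le habs hε'ε
    · have hPmax : #(Finset.univ.filter fun i : Fin (n+1) => μ a i ≤ hi + ε') = n := by
        omega
      have hlastgt : hi + ε' < μ a (Fin.last n) := by
        apply (monotone_count_le (hμ_mono a) (hi + ε') (Fin.last n)).2
        rw [hPmax, Fin.val_last]
      have hroot : (μ a (Fin.last n) - a) * (∏ i, (μ a (Fin.last n) - d i)) -
          (∑ i, c i ^ 2 * ∏ j ∈ Finset.univ.erase i, (μ a (Fin.last n) - d j)) = 0 := by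
        rw [← key a (μ a (Fin.last n))]
        exact Finset.prod_eq_zero (Finset.mem_univ (Fin.last n)) (by ring)
      obtain ⟨h1, h2⟩ := hCC (μ a (Fin.last n)) hlastgt.le hroot
      rw [abs_of_nonneg (by linarith)]
      exact h2
  refine ⟨fun j => ?_, ?_⟩
  · rw [Metric.tendsto_nhds]
    intro ε hε
    filter_upwards [main ε hε] with a ha
    rw [Real.dist_eq]
    exact ha.1 j
  · rw [Metric.tendsto_nhds]
    intro ε hε
    filter_upwards [main ε hε] with a ha
    rw [Real.dist_eq, sub_zero]
    exact ha.2
end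

section
/- Let n ≥ 1 and let 1 ≤ k ≤ n be an integer. The function Q_k(λ) = S_k^n(λ)/S_{k-1}^n(λ) is concave on the open positive orthant {λ ∈ ℝ^n : λ_i > 0 for all i}. -/
open Finset

variable {n : ℕ}

noncomputable def eS (s : Finset (Fin n)) (k : ℕ) (x : Fin n → ℝ) : ℝ :=
  ∑ t ∈ s.powersetCard k, ∏ i ∈ t, x i

lemma eS_zero (s : Finset (Fin n)) (x : Fin n → ℝ) : eS s 0 x = 1 := by
  simp [eS, Finset.powersetCard_zero]

lemma eS_one (s : Finset (Fin n)) (x : Fin n → ℝ) : eS s 1 x = ∑ i ∈ s, x i := by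
  simp [eS, Finset.powersetCard_one]

lemma eS_pos {s : Finset (Fin n)} {k : ℕ} {x : Fin n → ℝ} (hk : k ≤ s.card)
    (hx : ∀ i ∈ s, 0 < x i) : 0 < eS s k x := by
  refine Finset.sum_pos (fun t ht => ?_) (Finset.powersetCard_nonempty.2 hk)
  exact Finset.prod_pos fun i hi => hx i ((Finset.mem_powersetCard.1 ht).1 hi)

lemma eS_split {s : Finset (Fin n)} {i : Fin n} (hi : i ∈ s) (k : ℕ) (x : Fin n → ℝ) :
    eS s (k+1) x = x i * eS (s.erase i) k x + eS (s.erase i) (k+1) x := by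
  have h1 : i ∉ s.erase i := Finset.notMem_erase i s
  conv_lhs => rw [eS, ← Finset.insert_erase hi, Finset.powersetCard_succ_insert h1]
  rw [Finset.sum_union, Finset.sum_image]
  · rw [add_comm, eS, eS, Finset.mul_sum]
    congr 1
    refine Finset.sum_congr rfl fun t ht => ?_
    have hit : i ∉ t := fun h => h1 ((Finset.mem_powersetCard.1 ht).1 h)
    rw [Finset.prod_insert hit]
  · intro t ht u hu h
    have hit : i ∉ t := fun h' => h1 ((Finset.mem_powersetCard.1 ht).1 h')
    have hiu : i ∉ u := fun h' => h1 ((Finset.mem_powersetCard.1 hu).1 h')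
    have := congrArg (Finset.erase · i) h
    simpa [Finset.erase_insert hit, Finset.erase_insert hiu] using this
  · rw [Finset.disjoint_right]
    rintro t ht hmem
    simp only [Finset.mem_image] at ht
    obtain ⟨u, hu, rfl⟩ := ht
    exact h1 ((Finset.mem_powersetCard.1 hmem).1 (Finset.mem_insert_self i u))

lemma eS_euler (s : Finset (Fin n)) (k : ℕ) (x : Fin n → ℝ) :
    ((k+1 : ℕ) : ℝ) * eS s (k+1) x = ∑ i ∈ s, x i * eS (s.erase i) k x := by
  have step1 : ∀ i ∈ s, x i * eS (s.erase i) k x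
      = ∑ t ∈ (s.erase i).powersetCard k, ∏ j ∈ insert i t, x j := by
    intro i hi
    rw [eS, Finset.mul_sum]
    refine Finset.sum_congr rfl fun t ht => ?_
    have hit : i ∉ t := fun h => (Finset.notMem_erase i s) ((Finset.mem_powersetCard.1 ht).1 h)
    rw [Finset.prod_insert hit]
  rw [Finset.sum_congr rfl step1]
  rw [Finset.sum_sigma' s (fun i => (s.erase i).powersetCard k) (fun i t => ∏ j ∈ insert i t, x j)]
  rw [Finset.sum_nbij' (i := fun p : Σ _ : Fin n, Finset (Fin n) => (⟨insert p.1 p.2, p.1⟩ : Σ _ : Finset (Fin n), Fin n))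
    (j := fun q : Σ _ : Finset (Fin n), Fin n => (⟨q.2, q.1.erase q.2⟩ : Σ _ : Fin n, Finset (Fin n)))
    (t := (s.powersetCard (k+1)).sigma (fun u => u))
    (g := fun q => ∏ j ∈ q.1, x j)]
  · rw [Finset.sum_sigma]
    rw [eS, Finset.mul_sum]
    refine Finset.sum_congr rfl fun u hu => ?_
    simp [Finset.sum_const, nsmul_eq_mul, (Finset.mem_powersetCard.1 hu).2]
  · rintro ⟨i, t⟩ hp
    simp only [Finset.mem_sigma] at hp ⊢
    obtain ⟨his, ht⟩ := hp
    obtain ⟨hts, htc⟩ := Finset.mem_powersetCard.1 ht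
    have hit : i ∉ t := fun h => (Finset.notMem_erase i s) (hts h)
    refine ⟨Finset.mem_powersetCard.2 ⟨?_, ?_⟩, Finset.mem_insert_self i t⟩
    · exact Finset.insert_subset his (hts.trans (Finset.erase_subset i s))
    · rw [Finset.card_insert_of_notMem hit, htc]
  · rintro ⟨u, i⟩ hq
    simp only [Finset.mem_sigma] at hq ⊢
    obtain ⟨hu, hiu⟩ := hq
    obtain ⟨hus, huc⟩ := Finset.mem_powersetCard.1 hu
    refine ⟨hus hiu, Finset.mem_powersetCard.2 ⟨?_, ?_⟩⟩
    · exact fun j hj => Finset.mem_erase.2 ⟨(Finset.mem_erase.1 hj).1, hus (Finset.mem_erase.1 hj).2⟩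
    · rw [Finset.card_erase_of_mem hiu, huc]
      omega
  · rintro ⟨i, t⟩ hp
    simp only [Finset.mem_sigma] at hp
    have hit : i ∉ t := fun h => (Finset.notMem_erase i s) ((Finset.mem_powersetCard.1 hp.2).1 h)
    simp [Finset.erase_insert hit]
  · rintro ⟨u, i⟩ hq
    simp only [Finset.mem_sigma] at hq
    simp [Finset.insert_erase hq.2]
  · rintro ⟨i, t⟩ hp
    rfl

lemma h_eq {a E0 E1 : ℝ} (ha : 0 < a) (h0 : 0 < E0) (h1 : 0 < E1) :
    a * E1 / (a * E0 + E1) = a * (E1 / E0) / (a + E1 / E0) := by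
  rw [div_eq_div_iff (by positivity) (by positivity)]
  field_simp

lemma h_mono {a b b' : ℝ} (ha : 0 < a) (hb : 0 < b) (hbb : b ≤ b') :
    a * b / (a + b) ≤ a * b' / (a + b') := by
  have hb' : 0 < b' := lt_of_lt_of_le hb hbb
  rw [div_le_div_iff₀ (by positivity) (by positivity)]
  nlinarith [sq_nonneg a]

lemma h_super {a b c d : ℝ} (ha : 0 < a) (hb : 0 < b) (hc : 0 < c) (hd : 0 < d) :
    a * b / (a + b) + c * d / (c + d) ≤ (a + c) * (b + d) / (a + c + (b + d)) := by
  rw [div_add_div _ _ (by positivity) (by positivity),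
    div_le_div_iff₀ (by positivity) (by positivity)]
  nlinarith [sq_nonneg (a * d - c * b), mul_pos ha hb, mul_pos hc hd, mul_pos ha hd,
    mul_pos hc hb]

lemma eS_formula {s : Finset (Fin n)} {m : ℕ} {z : Fin n → ℝ} (hcard : m + 2 ≤ s.card)
    (hz : ∀ i ∈ s, 0 < z i) :
    eS s (m+2) z / eS s (m+1) z
      = ((m : ℝ) + 2)⁻¹ * ∑ i ∈ s, z i * eS (s.erase i) (m+1) z
          / (z i * eS (s.erase i) m z + eS (s.erase i) (m+1) z) := by
  have hden : 0 < eS s (m+1) z := eS_pos (by omega) hz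
  have key : ∀ i ∈ s, z i * eS (s.erase i) (m+1) z
      / (z i * eS (s.erase i) m z + eS (s.erase i) (m+1) z)
      = z i * eS (s.erase i) (m+1) z / eS s (m+1) z := by
    intro i hi
    rw [← eS_split hi m z]
  rw [Finset.sum_congr rfl key, ← Finset.sum_div, ← eS_euler s (m+1) z]
  have hm2 : ((m : ℝ) + 2) ≠ 0 := by positivity
  push_cast
  field_simp
  ring

lemma eS_superadd : ∀ (k : ℕ) (s : Finset (Fin n)) (x y : Fin n → ℝ), 1 ≤ k → k ≤ s.card →
    (∀ i ∈ s, 0 < x i) → (∀ i ∈ s, 0 < y i) →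
    eS s k x / eS s (k-1) x + eS s k y / eS s (k-1) y
      ≤ eS s k (x + y) / eS s (k-1) (x + y) := by
  intro k
  induction k with
  | zero => intro s x y h1; omega
  | succ k ih =>
    intro s x y _ hcard hx hy
    rcases Nat.eq_zero_or_pos k with hk0 | hkpos
    · subst hk0
      show eS s 1 x / eS s 0 x + eS s 1 y / eS s 0 y ≤ eS s 1 (x+y) / eS s 0 (x+y)
      simp only [eS_one, eS_zero, div_one, Pi.add_apply, Finset.sum_add_distrib]
      exact le_rfl
    · obtain ⟨m, rfl⟩ : ∃ m, k = m + 1 := ⟨k - 1, by omega⟩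
      have hxy : ∀ i ∈ s, 0 < (x + y) i := fun i hi => add_pos (hx i hi) (hy i hi)
      have hcard' : m + 2 ≤ s.card := hcard
      show eS s (m+2) x / eS s (m+1) x + eS s (m+2) y / eS s (m+1) y
        ≤ eS s (m+2) (x+y) / eS s (m+1) (x+y)
      rw [eS_formula hcard' hx, eS_formula hcard' hy, eS_formula hcard' hxy, ← mul_add]
      refine mul_le_mul_of_nonneg_left ?_ (by positivity)
      rw [← Finset.sum_add_distrib]
      refine Finset.sum_le_sum fun i hi => ?_
      have hie : (s.erase i).card = s.card - 1 := Finset.card_erase_of_mem hi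
      have hc1 : m + 1 ≤ (s.erase i).card := by omega
      have hxe : ∀ j ∈ s.erase i, 0 < x j := fun j hj => hx j (Finset.mem_of_mem_erase hj)
      have hye : ∀ j ∈ s.erase i, 0 < y j := fun j hj => hy j (Finset.mem_of_mem_erase hj)
      have hxye : ∀ j ∈ s.erase i, 0 < (x + y) j :=
        fun j hj => hxy j (Finset.mem_of_mem_erase hj)
      have hA1 : 0 < eS (s.erase i) (m+1) x := eS_pos hc1 hxe
      have hA0 : 0 < eS (s.erase i) m x := eS_pos (by omega) hxe
      have hB1 : 0 < eS (s.erase i) (m+1) y := eS_pos hc1 hye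
      have hB0 : 0 < eS (s.erase i) m y := eS_pos (by omega) hye
      have hC1 : 0 < eS (s.erase i) (m+1) (x+y) := eS_pos hc1 hxye
      have hC0 : 0 < eS (s.erase i) m (x+y) := eS_pos (by omega) hxye
      have hxi : 0 < x i := hx i hi
      have hyi : 0 < y i := hy i hi
      have hIH : eS (s.erase i) (m+1) x / eS (s.erase i) m x
          + eS (s.erase i) (m+1) y / eS (s.erase i) m y
          ≤ eS (s.erase i) (m+1) (x+y) / eS (s.erase i) m (x+y) := by
        simpa using ih (s.erase i) x y (by omega) hc1 hxe hye
      rw [h_eq hxi hA0 hA1, h_eq hyi hB0 hB1, h_eq (hxy i hi) hC0 hC1]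
      have hgx : 0 < eS (s.erase i) (m+1) x / eS (s.erase i) m x := by positivity
      have hgy : 0 < eS (s.erase i) (m+1) y / eS (s.erase i) m y := by positivity
      calc x i * (eS (s.erase i) (m+1) x / eS (s.erase i) m x)
            / (x i + eS (s.erase i) (m+1) x / eS (s.erase i) m x)
          + y i * (eS (s.erase i) (m+1) y / eS (s.erase i) m y)
            / (y i + eS (s.erase i) (m+1) y / eS (s.erase i) m y)
          ≤ (x i + y i) * (eS (s.erase i) (m+1) x / eS (s.erase i) m x
              + eS (s.erase i) (m+1) y / eS (s.erase i) m y)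
            / (x i + y i + (eS (s.erase i) (m+1) x / eS (s.erase i) m x
              + eS (s.erase i) (m+1) y / eS (s.erase i) m y)) :=
            h_super hxi hgx hyi hgy
        _ ≤ (x + y) i * (eS (s.erase i) (m+1) (x+y) / eS (s.erase i) m (x+y))
            / ((x + y) i + eS (s.erase i) (m+1) (x+y) / eS (s.erase i) m (x+y)) := by
            rw [Pi.add_apply]
            exact h_mono (add_pos hxi hyi) (add_pos hgx hgy) hIH

lemma eS_smul (s : Finset (Fin n)) (k : ℕ) (a : ℝ) (x : Fin n → ℝ) :
    eS s k (a • x) = a ^ k * eS s k x := by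
  rw [eS, eS, Finset.mul_sum]
  refine Finset.sum_congr rfl fun t ht => ?_
  rw [← (Finset.mem_powersetCard.1 ht).2]
  simp [Finset.prod_mul_distrib]

/-- Marcus–Lopes: the quotient `Q_k = S_k^n / S_{k-1}^n` is concave on the
open positive orthant. -/
theorem Qk_concaveOn_positive_orthant (n k : ℕ) (hn : 1 ≤ n) (hk1 : 1 ≤ k) (hkn : k ≤ n) :
    ConcaveOn ℝ {lam : Fin n → ℝ | ∀ i, 0 < lam i}
      (fun lam => esymmS n (k : ℤ) lam / esymmS n ((k : ℤ) - 1) lam) := by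
  obtain ⟨m, rfl⟩ : ∃ m, k = m + 1 := ⟨k - 1, by omega⟩
  have hbridge : ∀ lam : Fin n → ℝ,
      esymmS n ((m + 1 : ℕ) : ℤ) lam / esymmS n (((m + 1 : ℕ) : ℤ) - 1) lam
        = eS Finset.univ (m + 1) lam / eS Finset.univ m lam := by
    intro lam
    have e1 : ((m + 1 : ℕ) : ℤ).toNat = m + 1 := by omega
    have e2 : (((m + 1 : ℕ) : ℤ) - 1).toNat = m := by omega
    rw [esymmS, esymmS, if_neg (by omega), if_neg (by omega), e1, e2, eS, eS]
  have hcard : m + 1 ≤ (Finset.univ : Finset (Fin n)).card := by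
    simpa using hkn
  constructor
  · have hset : {lam : Fin n → ℝ | ∀ i, 0 < lam i}
        = Set.pi Set.univ (fun _ : Fin n => Set.Ioi (0 : ℝ)) := by
      ext z; simp [Set.mem_pi]
    rw [hset]
    exact convex_pi fun i _ => convex_Ioi 0
  · intro x hx y hy a b ha hb hab
    simp only [Set.mem_setOf_eq] at hx hy
    simp only [hbridge, smul_eq_mul]
    rcases ha.eq_or_lt with rfl | ha'
    · have hb1 : b = 1 := by linarith
      subst hb1
      simp
    rcases hb.eq_or_lt with rfl | hb'
    · have ha1 : a = 1 := by linarith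
      subst ha1
      simp
    have hax : ∀ i ∈ (Finset.univ : Finset (Fin n)), 0 < (a • x) i :=
      fun i _ => mul_pos ha' (hx i)
    have hby : ∀ i ∈ (Finset.univ : Finset (Fin n)), 0 < (b • y) i :=
      fun i _ => mul_pos hb' (hy i)
    have key := eS_superadd (m + 1) Finset.univ (a • x) (b • y) (by omega) hcard hax hby
    simp only [Nat.add_sub_cancel] at key
    have hqa : eS Finset.univ (m + 1) (a • x) / eS Finset.univ m (a • x)
        = a * (eS Finset.univ (m + 1) x / eS Finset.univ m x) := by
      have h0 : 0 < eS (Finset.univ : Finset (Fin n)) m x :=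
        eS_pos (by omega) (fun i _ => hx i)
      have ham : (a : ℝ) ^ m ≠ 0 := by positivity
      rw [eS_smul, eS_smul, pow_succ]
      field_simp
    have hqb : eS Finset.univ (m + 1) (b • y) / eS Finset.univ m (b • y)
        = b * (eS Finset.univ (m + 1) y / eS Finset.univ m y) := by
      have h0 : 0 < eS (Finset.univ : Finset (Fin n)) m y :=
        eS_pos (by omega) (fun i _ => hy i)
      have hbm : (b : ℝ) ^ m ≠ 0 := by positivity
      rw [eS_smul, eS_smul, pow_succ]
      field_simp
    rw [hqa, hqb] at key
    exact key
end

section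
/- Let n ≥ 2, let 2 ≤ k ≤ n be an integer, and let 0 < m ≤ M. Then there exist constants 0 < C_1 ≤ C_2, depending only on n, k, m and M, with the following property. For every λ = (λ_1, …, λ_n) ∈ ℝ^n with λ_1 ≥ M and m ≤ λ_i ≤ M for all 2 ≤ i ≤ n, the partial derivatives (∂Q_k/∂λ_i)(λ) = (S_{k-1,i}^n(λ)² − S_{k,i}^n(λ) S_{k-2,i}^n(λ))/S_{k-1}^n(λ)² of Q_k = S_k^n/S_{k-1}^n satisfy: C_1/λ_1² ≤ (∂Q_k/∂λ_1)(λ) ≤ C_2/λ_1², and C_1 ≤ (∂Q_k/∂λ_p)(λ) ≤ C_2 for every 2 ≤ p ≤ n. -/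
set_option maxHeartbeats 1000000
set_option linter.unusedSectionVars false

open Finset

section EsymHelpers

variable {α : Type*} [DecidableEq α]

/-- Elementary symmetric function with integer index over a finset. -/
noncomputable def Esym (U : Finset α) (k : ℤ) (f : α → ℝ) : ℝ :=
  if k < 0 then 0 else ∑ t ∈ U.powersetCard k.toNat, ∏ j ∈ t, f j

lemma Esym_neg {U : Finset α} {k : ℤ} {f : α → ℝ} (h : k < 0) : Esym U k f = 0 := if_pos h

lemma Esym_of_nonneg {U : Finset α} {k : ℤ} {f : α → ℝ} (h : 0 ≤ k) :
    Esym U k f = ∑ t ∈ U.powersetCard k.toNat, ∏ j ∈ t, f j := if_neg (not_lt.2 h)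

lemma Esym_zero (U : Finset α) (f : α → ℝ) : Esym U 0 f = 1 := by
  rw [Esym_of_nonneg le_rfl]
  simp

lemma Esym_nonneg {U : Finset α} {k : ℤ} {f : α → ℝ} (h : ∀ i ∈ U, 0 ≤ f i) :
    0 ≤ Esym U k f := by
  unfold Esym
  split
  · exact le_rfl
  · refine Finset.sum_nonneg fun t ht => Finset.prod_nonneg fun j hj => ?_
    exact h j ((Finset.mem_powersetCard.1 ht).1 hj)

lemma Esym_eq_zero_of_card_lt {U : Finset α} {k : ℤ} {f : α → ℝ} (h : (U.card : ℤ) < k) :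
    Esym U k f = 0 := by
  have h0 : (0:ℤ) ≤ k := le_trans (Int.ofNat_nonneg _) h.le
  rw [Esym_of_nonneg h0]
  have : U.card < k.toNat := by omega
  rw [Finset.powersetCard_eq_empty.2 this, Finset.sum_empty]

lemma Esym_pos {U : Finset α} {k : ℤ} {f : α → ℝ} (hf : ∀ i ∈ U, 0 < f i)
    (h0 : 0 ≤ k) (h : k ≤ (U.card : ℤ)) : 0 < Esym U k f := by
  rw [Esym_of_nonneg h0]
  refine Finset.sum_pos (fun t ht => Finset.prod_pos fun j hj =>
      hf j ((Finset.mem_powersetCard.1 ht).1 hj)) ?_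
  exact Finset.powersetCard_nonempty.2 (by omega)

lemma Esym_insert {U : Finset α} {x : α} (hx : x ∉ U) (k : ℤ) (f : α → ℝ) :
    Esym (insert x U) k f = Esym U k f + f x * Esym U (k - 1) f := by
  rcases lt_trichotomy k 0 with hk | hk | hk
  · rw [Esym_neg hk, Esym_neg hk, Esym_neg (by omega), mul_zero, add_zero]
  · subst hk
    rw [Esym_zero, Esym_zero, Esym_neg (by omega), mul_zero, add_zero]
  · have h1 : (0:ℤ) ≤ k := hk.le
    have h2 : (0:ℤ) ≤ k - 1 := by omega
    rw [Esym_of_nonneg h1, Esym_of_nonneg h1, Esym_of_nonneg h2]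
    obtain ⟨d, hd⟩ : ∃ d : ℕ, k.toNat = d + 1 := ⟨(k-1).toNat, by omega⟩
    have hd1 : (k - 1).toNat = d := by omega
    rw [hd, hd1, Finset.powersetCard_succ_insert hx]
    rw [Finset.sum_union]
    · congr 1
      rw [Finset.sum_image]
      · rw [Finset.mul_sum]
        refine Finset.sum_congr rfl fun t ht => ?_
        have hxt : x ∉ t := fun hxt => hx ((Finset.mem_powersetCard.1 ht).1 hxt)
        rw [Finset.prod_insert hxt]
      · intro s hs t ht hst
        have hxs : x ∉ s := fun h' => hx ((Finset.mem_powersetCard.1 hs).1 h')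
        have hxt : x ∉ t := fun h' => hx ((Finset.mem_powersetCard.1 ht).1 h')
        have := congrArg (fun u => Finset.erase u x) hst
        simpa [Finset.erase_insert hxs, Finset.erase_insert hxt] using this
    · rw [Finset.disjoint_left]
      intro t ht ht'
      obtain ⟨s, hs, rfl⟩ := Finset.mem_image.1 ht'
      have : insert x s ⊆ U := (Finset.mem_powersetCard.1 ht).1
      exact hx (this (Finset.mem_insert_self x s))

lemma Esym_le {U : Finset α} {k : ℤ} {f : α → ℝ} {M : ℝ} {N : ℕ}
    (hf : ∀ i ∈ U, 0 ≤ f i ∧ f i ≤ M) (hM : 0 ≤ M) (hU : U.card ≤ N) (h0 : 0 ≤ k) :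
    Esym U k f ≤ (N.choose k.toNat : ℝ) * M ^ k.toNat := by
  rw [Esym_of_nonneg h0]
  calc ∑ t ∈ U.powersetCard k.toNat, ∏ j ∈ t, f j
      ≤ ∑ t ∈ U.powersetCard k.toNat, M ^ k.toNat := by
        refine Finset.sum_le_sum fun t ht => ?_
        obtain ⟨hts, htc⟩ := Finset.mem_powersetCard.1 ht
        calc ∏ j ∈ t, f j ≤ ∏ j ∈ t, M :=
              Finset.prod_le_prod (fun j hj => (hf j (hts hj)).1) (fun j hj => (hf j (hts hj)).2)
          _ = M ^ k.toNat := by rw [Finset.prod_const, htc]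
    _ = (U.card.choose k.toNat : ℝ) * M ^ k.toNat := by
        rw [Finset.sum_const, Finset.card_powersetCard, nsmul_eq_mul]
    _ ≤ (N.choose k.toNat : ℝ) * M ^ k.toNat := by
        have := Nat.choose_le_choose k.toNat hU
        have hMp : (0:ℝ) ≤ M ^ k.toNat := pow_nonneg hM _
        exact mul_le_mul_of_nonneg_right (by exact_mod_cast this) hMp

lemma le_Esym {U I : Finset α} {k : ℤ} {f : α → ℝ} (hf : ∀ i ∈ U, 0 ≤ f i)
    (hI : I ⊆ U) (hc : I.card = k.toNat) (h0 : 0 ≤ k) :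
    ∏ j ∈ I, f j ≤ Esym U k f := by
  rw [Esym_of_nonneg h0]
  refine Finset.single_le_sum (f := fun t => ∏ j ∈ t, f j) ?_ ?_
  · exact fun t ht => Finset.prod_nonneg fun j hj =>
      hf j ((Finset.mem_powersetCard.1 ht).1 hj)
  · exact Finset.mem_powersetCard.2 ⟨hI, hc⟩

/-- Quantitative Newton inequality for elementary symmetric functions. -/
lemma newton_strong (f : α → ℝ) :
    ∀ U : Finset α, (∀ i ∈ U, 0 < f i) → ∀ a : ℤ, 1 ≤ a →
      Esym U (a+1) f * Esym U (a-1) f + Esym U a (fun i => f i ^ 2) ≤ (Esym U a f) ^ 2 := by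
  intro U
  induction U using Finset.induction_on with
  | empty =>
    intro _ a ha
    have h1 : Esym (∅ : Finset α) (a+1) f = 0 :=
      Esym_eq_zero_of_card_lt (by simp only [Finset.card_empty, Nat.cast_zero]; omega)
    have h2 : Esym (∅ : Finset α) a (fun i => f i ^ 2) = 0 :=
      Esym_eq_zero_of_card_lt (by simp only [Finset.card_empty, Nat.cast_zero]; omega)
    rw [h1, h2]
    have := sq_nonneg (Esym (∅ : Finset α) a f)
    linarith
  | insert _ _ hx =>
    rename_i x U IH0
    intro hf a ha
    have hfx : 0 < f x := hf x (Finset.mem_insert_self x U)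
    have hfU : ∀ i ∈ U, 0 < f i := fun i hi => hf i (Finset.mem_insert_of_mem hi)
    have hfU' : ∀ i ∈ U, 0 ≤ f i := fun i hi => (hfU i hi).le
    have IH := IH0 hfU
    -- weak Newton on U
    have wk : ∀ b : ℤ, 1 ≤ b → Esym U (b+1) f * Esym U (b-1) f ≤ (Esym U b f) ^ 2 := by
      intro b hb
      have := IH b hb
      have h2 : 0 ≤ Esym U b (fun i => f i ^ 2) :=
        Esym_nonneg (fun i hi => sq_nonneg (f i))
      linarith
    -- cross inequality on U
    have cross : Esym U (a+1) f * Esym U (a-2) f ≤ Esym U a f * Esym U (a-1) f := by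
      rcases eq_or_lt_of_le ha with h1 | h2
      · have hz : Esym U (a-2) f = 0 := Esym_neg (by omega)
        rw [hz, mul_zero]
        exact mul_nonneg (Esym_nonneg hfU') (Esym_nonneg hfU')
      · have ha2 : 2 ≤ a := by omega
        by_cases hcard : (U.card : ℤ) < a + 1
        · rw [Esym_eq_zero_of_card_lt hcard, zero_mul]
          exact mul_nonneg (Esym_nonneg hfU') (Esym_nonneg hfU')
        · push_neg at hcard
          have pA : 0 < Esym U a f := Esym_pos hfU (by omega) (by omega)
          have pAm : 0 < Esym U (a-1) f := Esym_pos hfU (by omega) (by omega)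
          have pAp : 0 ≤ Esym U (a+1) f := Esym_nonneg hfU'
          have pAmm : 0 ≤ Esym U (a-2) f := Esym_nonneg hfU'
          have w1 := wk a ha
          have w2 := wk (a-1) (by omega)
          have e1 : a - 1 + 1 = a := by ring
          have e2 : a - 1 - 1 = a - 2 := by ring
          rw [e1, e2] at w2
          nlinarith [mul_le_mul w1 w2 (mul_nonneg pA.le pAmm) (sq_nonneg (Esym U a f)),
            mul_pos pA pAm]
    -- second IH, valid also for a = 1
    have IH2 : Esym U a f * Esym U (a-2) f + Esym U (a-1) (fun i => f i ^ 2)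
        ≤ (Esym U (a-1) f) ^ 2 := by
      rcases eq_or_lt_of_le ha with h1 | h2
      · have hz : Esym U (a-2) f = 0 := Esym_neg (by omega)
        have hz1 : a - 1 = 0 := by omega
        rw [hz, hz1, mul_zero, Esym_zero, Esym_zero]
        norm_num
      · have := IH (a-1) (by omega)
        have e1 : a - 1 + 1 = a := by ring
        have e2 : a - 1 - 1 = a - 2 := by ring
        rw [e1, e2] at this
        exact this
    have IH1 := IH a ha
    -- expand the insert
    rw [Esym_insert hx, Esym_insert hx, Esym_insert hx, Esym_insert hx]
    have e1 : a + 1 - 1 = a := by ring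
    have e2 : a - 1 - 1 = a - 2 := by ring
    rw [e1, e2]
    set x1 := f x
    set A := Esym U a f
    set Ap := Esym U (a+1) f
    set Am := Esym U (a-1) f
    set Amm := Esym U (a-2) f
    set Ga := Esym U a (fun i => f i ^ 2)
    set Gm := Esym U (a-1) (fun i => f i ^ 2)
    show (Ap + x1 * A) * (Am + x1 * Amm) + (Ga + x1 ^ 2 * Gm) ≤ (A + x1 * Am) ^ 2
    nlinarith [mul_le_mul_of_nonneg_left cross hfx.le,
      mul_le_mul_of_nonneg_left IH2 (sq_nonneg x1), sq_nonneg x1, hfx]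

end EsymHelpers


noncomputable def dQk (n : ℕ) (k : ℕ) (lam : Fin n → ℝ) (i : Fin n) : ℝ :=
  ((esymmSDel n ((k : ℤ) - 1) lam i) ^ 2 -
      esymmSDel n (k : ℤ) lam i * esymmSDel n ((k : ℤ) - 2) lam i) /
    (esymmS n ((k : ℤ) - 1) lam) ^ 2

/-- Estimate (5.16): when `λ_1 ≥ M` blows up and `m ≤ λ_i ≤ M` for `i ≥ 2`,
the linearized coefficients satisfy `C₁/λ_1² ≤ ∂Q_k/∂λ_1 ≤ C₂/λ_1²` and
`C₁ ≤ ∂Q_k/∂λ_p ≤ C₂` for `p ≥ 2`, with `C₁, C₂` depending only on `n, k, m, M`. -/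
theorem dQk_degeneration_rate (n k : ℕ) (hn : 2 ≤ n) (hk2 : 2 ≤ k) (hkn : k ≤ n)
    (m M : ℝ) (hm : 0 < m) (hmM : m ≤ M) :
    ∃ C₁ C₂ : ℝ, 0 < C₁ ∧ C₁ ≤ C₂ ∧
      ∀ lam : Fin n → ℝ, ∀ i₀ : Fin n, (i₀ : ℕ) = 0 →
        M ≤ lam i₀ →
        (∀ i : Fin n, i ≠ i₀ → m ≤ lam i ∧ lam i ≤ M) →
        (C₁ / (lam i₀) ^ 2 ≤ dQk n k lam i₀ ∧ dQk n k lam i₀ ≤ C₂ / (lam i₀) ^ 2) ∧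
          ∀ p : Fin n, p ≠ i₀ → C₁ ≤ dQk n k lam p ∧ dQk n k lam p ≤ C₂ := by
  have hM : 0 < M := lt_of_lt_of_le hm hmM
  -- the constants
  set chA : ℝ := ((n-1).choose (k-1) : ℝ) with hchA
  set chB : ℝ := ((n-1).choose (k-2) : ℝ) with hchB
  have hchA1 : 1 ≤ chA := by
    rw [hchA]; exact_mod_cast Nat.succ_le_of_lt (Nat.choose_pos (by omega))
  have hchB1 : 1 ≤ chB := by
    rw [hchB]; exact_mod_cast Nat.succ_le_of_lt (Nat.choose_pos (by omega))
  set Kc : ℝ := (chA + chB) * M ^ (k-2) with hKcdef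
  set Bc : ℝ := chA * M ^ (k-1) with hBcdef
  set cc : ℝ := m ^ (k-2) with hccdef
  have hcc : 0 < cc := pow_pos hm _
  have hKc : 0 < Kc := mul_pos (by linarith) (pow_pos hM _)
  have hBc : 0 < Bc := mul_pos (by linarith) (pow_pos hM _)
  have hccKc : cc ≤ Kc := by
    have h1 : cc ≤ M ^ (k-2) := pow_le_pow_left₀ hm.le hmM _
    nlinarith [pow_pos hM (k-2)]
  refine ⟨min ((m^(k-1))^2 / Kc^2) (cc^2 / Kc^2), max (Bc^2 / cc^2) (Kc^2 / cc^2),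
    ?_, ?_, ?_⟩
  · exact lt_min (div_pos (pow_pos (pow_pos hm _) 2) (pow_pos hKc 2))
      (div_pos (pow_pos hcc 2) (pow_pos hKc 2))
  · calc min ((m^(k-1))^2 / Kc^2) (cc^2 / Kc^2) ≤ cc^2 / Kc^2 := min_le_right _ _
      _ ≤ 1 := by
          rw [div_le_one (pow_pos hKc 2)]
          exact pow_le_pow_left₀ hcc.le hccKc 2
      _ ≤ Kc^2 / cc^2 := by
          rw [le_div_iff₀ (pow_pos hcc 2), one_mul]
          exact pow_le_pow_left₀ hcc.le hccKc 2
      _ ≤ max (Bc^2 / cc^2) (Kc^2 / cc^2) := le_max_right _ _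
  intro lam i₀ hi₀ hMl hbd
  set Λ := lam i₀ with hΛdef
  have hΛ : 0 < Λ := lt_of_lt_of_le hM hMl
  have hpos : ∀ i : Fin n, 0 < lam i := by
    intro i
    by_cases h : i = i₀
    · rw [h]; exact hΛ
    · exact lt_of_lt_of_le hm (hbd i h).1
  -- index bookkeeping
  have ht1 : ((k:ℤ) - 1).toNat = k - 1 := by omega
  have ht2 : ((k:ℤ) - 2).toNat = k - 2 := by omega
  have ht0 : ((k:ℤ)).toNat = k := by omega
  have hk10 : (0:ℤ) ≤ (k:ℤ) - 1 := by omega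
  have hk20 : (0:ℤ) ≤ (k:ℤ) - 2 := by omega
  have hk00 : (0:ℤ) ≤ (k:ℤ) := by omega
  -- the deleted set at i₀
  set U₀ : Finset (Fin n) := Finset.univ.erase i₀ with hU₀
  have hcardU₀ : U₀.card = n - 1 := by
    rw [hU₀, Finset.card_erase_of_mem (Finset.mem_univ _), Finset.card_univ, Fintype.card_fin]
  have hU₀bd : ∀ i ∈ U₀, 0 ≤ lam i ∧ lam i ≤ M := by
    intro i hi
    have := hbd i (Finset.ne_of_mem_erase hi)
    exact ⟨le_trans hm.le this.1, this.2⟩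
  have hU₀m : ∀ i ∈ U₀, m ≤ lam i := fun i hi => (hbd i (Finset.ne_of_mem_erase hi)).1
  have hU₀nn : ∀ i ∈ U₀, 0 ≤ lam i := fun i hi => (hU₀bd i hi).1
  have hi₀U₀ : i₀ ∉ U₀ := Finset.notMem_erase _ _
  have hins : insert i₀ U₀ = Finset.univ := Finset.insert_erase (Finset.mem_univ i₀)
  -- identification of the defs with Esym
  have hSdel : ∀ (j : ℤ) (i : Fin n),
      esymmSDel n j lam i = Esym (Finset.univ.erase i) j lam := fun _ _ => rfl
  have hSfull : ∀ (j : ℤ), esymmS n j lam = Esym (Finset.univ : Finset (Fin n)) j lam :=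
    fun _ => rfl
  -- the denominator S
  set S : ℝ := esymmS n ((k:ℤ) - 1) lam with hSdef
  have hSsplit : S = Esym U₀ ((k:ℤ)-1) lam + Λ * Esym U₀ ((k:ℤ)-2) lam := by
    rw [hSdef, hSfull, ← hins, Esym_insert hi₀U₀]
    have e : (k:ℤ) - 1 - 1 = (k:ℤ) - 2 := by ring
    rw [e]
  -- generic subset lower bounds
  have hlowgen : ∀ (U : Finset (Fin n)) (j : ℤ), 0 ≤ j → j.toNat ≤ U.card →
      (∀ i ∈ U, m ≤ lam i) → m ^ j.toNat ≤ Esym U j lam := by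
    intro U j hj hjc hmU
    obtain ⟨I, hIU, hIc⟩ := Finset.exists_subset_card_eq hjc
    have hnn : ∀ i ∈ U, 0 ≤ lam i := fun i hi => le_trans hm.le (hmU i hi)
    calc m ^ j.toNat = ∏ _i ∈ I, m := by rw [Finset.prod_const, hIc]
      _ ≤ ∏ i ∈ I, lam i :=
          Finset.prod_le_prod (fun _ _ => hm.le) (fun i hi => hmU i (hIU hi))
      _ ≤ Esym U j lam := le_Esym hnn hIU hIc hj
  -- S bounds
  have hSlow : Λ * cc ≤ S := by
    rw [hSsplit, hccdef]
    have h1 : 0 ≤ Esym U₀ ((k:ℤ)-1) lam := Esym_nonneg hU₀nn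
    have h2 : m ^ (k-2) ≤ Esym U₀ ((k:ℤ)-2) lam := by
      have := hlowgen U₀ ((k:ℤ)-2) hk20 (by rw [ht2, hcardU₀]; omega) hU₀m
      rwa [ht2] at this
    nlinarith
  have hSup : S ≤ Λ * Kc := by
    have h1 : Esym U₀ ((k:ℤ)-1) lam ≤ chA * M ^ (k-1) := by
      have := Esym_le hU₀bd hM.le (le_of_eq hcardU₀) hk10
      rwa [ht1] at this
    have h2 : Esym U₀ ((k:ℤ)-2) lam ≤ chB * M ^ (k-2) := by
      have := Esym_le hU₀bd hM.le (le_of_eq hcardU₀) hk20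
      rwa [ht2] at this
    have h3 : M ^ (k-1) ≤ Λ * M ^ (k-2) := by
      have e : k - 1 = (k-2) + 1 := by omega
      rw [e, pow_succ]
      calc M ^ (k-2) * M ≤ M ^ (k-2) * Λ :=
            mul_le_mul_of_nonneg_left hMl (pow_pos hM _).le
        _ = Λ * M ^ (k-2) := mul_comm _ _
    calc S = Esym U₀ ((k:ℤ)-1) lam + Λ * Esym U₀ ((k:ℤ)-2) lam := hSsplit
      _ ≤ chA * M ^ (k-1) + Λ * (chB * M ^ (k-2)) :=
          add_le_add h1 (mul_le_mul_of_nonneg_left h2 hΛ.le)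
      _ ≤ chA * (Λ * M ^ (k-2)) + Λ * (chB * M ^ (k-2)) :=
          add_le_add_left (mul_le_mul_of_nonneg_left h3 (by linarith)) _
      _ = Λ * ((chA + chB) * M ^ (k-2)) := by ring
  have hSpos : 0 < S := lt_of_lt_of_le (mul_pos hΛ hcc) hSlow
  have hS2low : Λ^2 * cc^2 ≤ S^2 := by
    have := pow_le_pow_left₀ (mul_pos hΛ hcc).le hSlow 2
    nlinarith
  have hS2up : S^2 ≤ Λ^2 * Kc^2 := by
    have := pow_le_pow_left₀ hSpos.le hSup 2
    nlinarith
  have hS2pos : 0 < S^2 := pow_pos hSpos 2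
  -- numerator bounds: general lemma for the deleted set at any index q
  have hnum : ∀ q : Fin n,
      Esym (Finset.univ.erase q) ((k:ℤ)-1) (fun i => lam i ^ 2)
        ≤ (esymmSDel n ((k:ℤ)-1) lam q)^2 -
          esymmSDel n (k:ℤ) lam q * esymmSDel n ((k:ℤ)-2) lam q := by
    intro q
    have hposU : ∀ i ∈ Finset.univ.erase q, 0 < lam i := fun i _ => hpos i
    have := newton_strong lam (Finset.univ.erase q) hposU ((k:ℤ)-1) (by omega)
    have e1 : (k:ℤ) - 1 + 1 = (k:ℤ) := by ring
    have e2 : (k:ℤ) - 1 - 1 = (k:ℤ) - 2 := by ring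
    rw [e1, e2] at this
    rw [hSdel, hSdel, hSdel]
    linarith
  -- part 1 : the bound at i₀
  constructor
  · -- D₀ bounds
    set D₀ : ℝ := (esymmSDel n ((k:ℤ)-1) lam i₀)^2 -
        esymmSDel n (k:ℤ) lam i₀ * esymmSDel n ((k:ℤ)-2) lam i₀ with hD₀
    have hD₀low : (m^(k-1))^2 ≤ D₀ := by
      refine le_trans ?_ (hnum i₀)
      have h2 : ∀ i ∈ U₀, m^2 ≤ lam i ^ 2 := fun i hi =>
        pow_le_pow_left₀ hm.le (hU₀m i hi) 2
      obtain ⟨I, hIU, hIc⟩ := Finset.exists_subset_card_eq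
        (show ((k:ℤ)-1).toNat ≤ U₀.card by rw [ht1, hcardU₀]; omega)
      have hnn2 : ∀ i ∈ U₀, 0 ≤ lam i ^ 2 := fun i _ => sq_nonneg _
      calc (m^(k-1))^2 = ∏ _i ∈ I, m^2 := by
            rw [Finset.prod_const, hIc, ht1, ← pow_mul, ← pow_mul, Nat.mul_comm]
        _ ≤ ∏ i ∈ I, lam i ^ 2 :=
            Finset.prod_le_prod (fun _ _ => sq_nonneg m)
              (fun i hi => h2 i (hIU hi))
        _ ≤ Esym U₀ ((k:ℤ)-1) (fun i => lam i ^ 2) := le_Esym hnn2 hIU hIc hk10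
    have hD₀up : D₀ ≤ Bc^2 := by
      rw [hD₀]
      have h1 : esymmSDel n ((k:ℤ)-1) lam i₀ ≤ Bc := by
        rw [hSdel, hBcdef]
        have := Esym_le hU₀bd hM.le (le_of_eq hcardU₀) hk10
        rwa [ht1] at this
      have h1' : 0 ≤ esymmSDel n ((k:ℤ)-1) lam i₀ := by
        rw [hSdel]; exact Esym_nonneg hU₀nn
      have h2 : 0 ≤ esymmSDel n (k:ℤ) lam i₀ := by
        rw [hSdel]; exact Esym_nonneg hU₀nn
      have h3 : 0 ≤ esymmSDel n ((k:ℤ)-2) lam i₀ := by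
        rw [hSdel]; exact Esym_nonneg hU₀nn
      nlinarith
    have hdq : dQk n k lam i₀ = D₀ / S^2 := rfl
    rw [hdq]
    constructor
    · calc min ((m^(k-1))^2 / Kc^2) (cc^2 / Kc^2) / Λ^2
          ≤ ((m^(k-1))^2 / Kc^2) / Λ^2 :=
            div_le_div₀ (by positivity) (min_le_left _ _) (by positivity) le_rfl
        _ = (m^(k-1))^2 / (Λ^2 * Kc^2) := by
            rw [div_div, mul_comm]
        _ ≤ D₀ / S^2 := div_le_div₀ (le_trans (by positivity) hD₀low)
            hD₀low hS2pos hS2up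
    · calc D₀ / S^2 ≤ Bc^2 / (Λ^2 * cc^2) :=
          div_le_div₀ (pow_nonneg hBc.le 2) hD₀up (by positivity) hS2low
        _ = (Bc^2 / cc^2) / Λ^2 := by rw [div_div, mul_comm]
        _ ≤ max (Bc^2 / cc^2) (Kc^2 / cc^2) / Λ^2 :=
            div_le_div₀ (le_trans (by positivity) (le_max_left _ _)) (le_max_left _ _)
              (by positivity) le_rfl
  -- part 2 : bounds at p ≠ i₀
  · intro p hp
    have hi₀Up : i₀ ∈ Finset.univ.erase p := Finset.mem_erase.2 ⟨Ne.symm hp, Finset.mem_univ _⟩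
    set Up : Finset (Fin n) := Finset.univ.erase p with hUpdef
    set V : Finset (Fin n) := Up.erase i₀ with hVdef
    have hcardUp : Up.card = n - 1 := by
      rw [hUpdef, Finset.card_erase_of_mem (Finset.mem_univ _), Finset.card_univ,
        Fintype.card_fin]
    have hcardV : V.card = n - 2 := by
      have : V.card = Up.card - 1 := by rw [hVdef]; exact Finset.card_erase_of_mem hi₀Up
      omega
    have hi₀V : i₀ ∉ V := Finset.notMem_erase _ _
    have hinsV : insert i₀ V = Up := Finset.insert_erase hi₀Up
    have hVbd : ∀ i ∈ V, 0 ≤ lam i ∧ lam i ≤ M := by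
      intro i hi
      have hne : i ≠ i₀ := Finset.ne_of_mem_erase hi
      have := hbd i hne
      exact ⟨le_trans hm.le this.1, this.2⟩
    have hUpnn : ∀ i ∈ Up, 0 ≤ lam i := fun i _ => (hpos i).le
    set Dp : ℝ := (esymmSDel n ((k:ℤ)-1) lam p)^2 -
        esymmSDel n (k:ℤ) lam p * esymmSDel n ((k:ℤ)-2) lam p with hDp
    have hDplow : Λ^2 * cc^2 ≤ Dp := by
      refine le_trans ?_ (hnum p)
      obtain ⟨J, hJV, hJc⟩ := Finset.exists_subset_card_eq
        (show k - 2 ≤ V.card by omega)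
      have hi₀J : i₀ ∉ J := fun h => hi₀V (hJV h)
      have hJUp : J ⊆ Up := fun x hx => Finset.erase_subset _ _ (hJV hx)
      have hIUp : insert i₀ J ⊆ Up := by
        intro x hx
        rcases Finset.mem_insert.1 hx with h | h
        · rw [h]; exact hi₀Up
        · exact hJUp h
      have hIc : (insert i₀ J).card = ((k:ℤ)-1).toNat := by
        rw [ht1, Finset.card_insert_of_notMem hi₀J, hJc]; omega
      have hnn2 : ∀ i ∈ Up, 0 ≤ lam i ^ 2 := fun i _ => sq_nonneg _
      calc Λ^2 * cc^2 = Λ^2 * ∏ _i ∈ J, m^2 := by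
            rw [Finset.prod_const, hJc, hccdef, ← pow_mul, ← pow_mul, Nat.mul_comm]
        _ ≤ Λ^2 * ∏ i ∈ J, lam i ^ 2 := by
            refine mul_le_mul_of_nonneg_left ?_ (sq_nonneg Λ)
            exact Finset.prod_le_prod (fun _ _ => sq_nonneg m)
              (fun i hi => pow_le_pow_left₀ hm.le ((hbd i (Finset.ne_of_mem_erase (hJV hi))).1) 2)
        _ = ∏ i ∈ insert i₀ J, lam i ^ 2 := by
            rw [Finset.prod_insert hi₀J, hΛdef]
        _ ≤ Esym Up ((k:ℤ)-1) (fun i => lam i ^ 2) := le_Esym hnn2 hIUp hIc hk10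
    have hEkp1 : esymmSDel n ((k:ℤ)-1) lam p ≤ Λ * Kc := by
      rw [hSdel, ← hUpdef, ← hinsV, Esym_insert hi₀V]
      have e : (k:ℤ) - 1 - 1 = (k:ℤ) - 2 := by ring
      rw [e]
      have h1 : Esym V ((k:ℤ)-1) lam ≤ chA * M ^ (k-1) := by
        have := Esym_le hVbd hM.le (show V.card ≤ n - 1 by omega) hk10
        rwa [ht1] at this
      have h2 : Esym V ((k:ℤ)-2) lam ≤ chB * M ^ (k-2) := by
        have := Esym_le hVbd hM.le (show V.card ≤ n - 1 by omega) hk20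
        rwa [ht2] at this
      have h3 : M ^ (k-1) ≤ Λ * M ^ (k-2) := by
        have e2 : k - 1 = (k-2) + 1 := by omega
        rw [e2, pow_succ]
        calc M ^ (k-2) * M ≤ M ^ (k-2) * Λ :=
              mul_le_mul_of_nonneg_left hMl (pow_pos hM _).le
          _ = Λ * M ^ (k-2) := mul_comm _ _
      calc Esym V ((k:ℤ)-1) lam + lam i₀ * Esym V ((k:ℤ)-2) lam
          ≤ chA * M ^ (k-1) + Λ * (chB * M ^ (k-2)) := by
            rw [← hΛdef]
            exact add_le_add h1 (mul_le_mul_of_nonneg_left h2 hΛ.le)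
        _ ≤ chA * (Λ * M ^ (k-2)) + Λ * (chB * M ^ (k-2)) :=
            add_le_add_left (mul_le_mul_of_nonneg_left h3 (by linarith)) _
        _ = Λ * ((chA + chB) * M ^ (k-2)) := by ring
    have hDpup : Dp ≤ Λ^2 * Kc^2 := by
      have h1' : 0 ≤ esymmSDel n ((k:ℤ)-1) lam p := by
        rw [hSdel]; exact Esym_nonneg hUpnn
      have h2' : 0 ≤ esymmSDel n (k:ℤ) lam p := by
        rw [hSdel]; exact Esym_nonneg hUpnn
      have h3' : 0 ≤ esymmSDel n ((k:ℤ)-2) lam p := by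
        rw [hSdel]; exact Esym_nonneg hUpnn
      have := pow_le_pow_left₀ h1' hEkp1 2
      nlinarith
    have hdq : dQk n k lam p = Dp / S^2 := rfl
    rw [hdq]
    have hΛ2 : (Λ:ℝ)^2 ≠ 0 := by positivity
    constructor
    · calc min ((m^(k-1))^2 / Kc^2) (cc^2 / Kc^2) ≤ cc^2 / Kc^2 := min_le_right _ _
        _ = Λ^2 * cc^2 / (Λ^2 * Kc^2) := (mul_div_mul_left _ _ hΛ2).symm
        _ ≤ Dp / S^2 := div_le_div₀ (le_trans (by positivity) hDplow) hDplow hS2pos hS2up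
    · calc Dp / S^2 ≤ Λ^2 * Kc^2 / (Λ^2 * cc^2) :=
          div_le_div₀ (by positivity) hDpup (by positivity) hS2low
        _ = Kc^2 / cc^2 := mul_div_mul_left _ _ hΛ2
        _ ≤ max (Bc^2 / cc^2) (Kc^2 / cc^2) := le_max_right _ _
end
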